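/- arXiv:1502.02199 — 4 statements merged into one kernel-verified Lean document; each statement's English description precedes it below -/
import Mathlib

section
/- Let q ≥ 2, ℓ ≥ 1 and t ≥ 1 be integers such that every prime factor of t divides q. Then t · E(q, t·q^ℓ, t·ℓ) = q^{(t−1)·ℓ}; that is, the maximum number of eBugs with t·q^ℓ LEDs in q colours admitting a (t·ℓ)-valid colouring is exactly q^{(t−1)ℓ}/t. -/
/-- A `(q,k)`-colouring of `n` eBugs is `ℓ`-valid if its `ℓ`-window map is injective. -/
def ebugValid (q k ℓ n : ℕ) (c : Fin n → ZMod k → Fin q) : Prop :=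
  Function.Injective (fun p : Fin n × ZMod k => fun s : Fin ℓ => c p.1 (p.2 + (s : ℕ)))

/-- The eBug number `E(q,k,ℓ)`: the greatest `n` admitting an `ℓ`-valid `(q,k)`-colouring. -/
noncomputable def eBugNumber (q k ℓ : ℕ) : ℕ :=
  sSup {n : ℕ | ∃ c : Fin n → ZMod k → Fin q, ebugValid q k ℓ n c}


open Module

private lemma span_powers_top {F K : Type} [Field F] [Field K] [Algebra F K] [Finite K]
    (α : K) (hgen : ∀ x : K, x = 0 ∨ ∃ n : ℕ, x = α ^ n) :
    Submodule.span F (Set.range fun u : Fin (Module.finrank F K) => α ^ (u : ℕ)) = ⊤ := by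
  classical
  set N := Module.finrank F K with hN
  have hfin : Module.Finite F K := Module.Finite.of_finite
  -- not linearly independent
  have hdep : ¬ LinearIndependent F (fun i : Fin (N+1) => α ^ (i : ℕ)) := by
    intro h
    have := h.fintype_card_le_finrank
    simp only [Fintype.card_fin, ← hN] at this
    omega
  obtain ⟨g, hsum, i₀, hgi₀⟩ := Fintype.not_linearIndependent_iff.mp hdep
  set s : Finset (Fin (N+1)) := Finset.univ.filter (fun i => g i ≠ 0) with hs
  have hsne : s.Nonempty := ⟨i₀, by simp [hs, hgi₀]⟩
  set M : Fin (N+1) := s.max' hsne with hM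
  have hgM : g M ≠ 0 := by
    have := s.max'_mem hsne
    simp [hs] at this; exact this
  -- W := span of strictly smaller powers
  set W : Submodule F K := Submodule.span F (Set.range fun u : Fin (M : ℕ) => α ^ (u : ℕ)) with hW
  have hpowW : ∀ u : ℕ, u < (M : ℕ) → α ^ u ∈ W := by
    intro u hu
    exact Submodule.subset_span ⟨⟨u, hu⟩, rfl⟩
  have hMW : α ^ (M : ℕ) ∈ W := by
    have h1 : g M • α ^ (M : ℕ) = - ∑ i ∈ Finset.univ.erase M, g i • α ^ (i : ℕ) := by
      rw [eq_neg_iff_add_eq_zero]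
      simpa using
        (Finset.add_sum_erase Finset.univ (fun i => g i • α ^ (i : ℕ))
          (Finset.mem_univ M)).trans hsum
    have h2 : g M • α ^ (M : ℕ) ∈ W := by
      rw [h1]
      refine Submodule.neg_mem _ (Submodule.sum_mem _ ?_)
      intro i hi
      by_cases hgi : g i = 0
      · simp [hgi]
      · refine Submodule.smul_mem _ _ (hpowW _ ?_)
        have hle : i ≤ M := s.le_max' i (by simp [hs, hgi])
        have hne : i ≠ M := Finset.ne_of_mem_erase hi
        exact Fin.lt_iff_val_lt_val.mp (lt_of_le_of_ne hle hne)
    have := Submodule.smul_mem W (g M)⁻¹ h2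
    rwa [inv_smul_smul₀ hgM] at this
  -- W is closed under multiplication by α
  have hclosed : ∀ x ∈ W, α * x ∈ W := by
    intro x hx
    induction hx using Submodule.span_induction with
    | mem y hy =>
      obtain ⟨⟨u, hu⟩, rfl⟩ := hy
      rcases Nat.lt_or_ge (u+1) (M : ℕ) with h | h
      · rw [← pow_succ']
        exact hpowW (u+1) h
      · have huM : u + 1 = (M : ℕ) := le_antisymm hu h
        rw [← pow_succ', huM]
        exact hMW
    | zero => simpa using W.zero_mem
    | add y z _ _ hy hz => simpa [mul_add] using W.add_mem hy hz
    | smul c y _ hy => simpa [mul_smul_comm] using W.smul_mem c hy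
  -- all powers lie in W
  have hallpow : ∀ n : ℕ, α ^ n ∈ W := by
    have key : ∀ k : ℕ, α ^ ((M : ℕ) + k) ∈ W := by
      intro k
      induction k with
      | zero => simpa using hMW
      | succ k ih =>
        rw [show (M : ℕ) + (k+1) = ((M : ℕ)+k)+1 from rfl, pow_succ, mul_comm]
        exact hclosed _ ih
    intro n
    rcases Nat.lt_or_ge n (M : ℕ) with h | h
    · exact hpowW n h
    · obtain ⟨k, rfl⟩ := Nat.exists_eq_add_of_le h
      exact key k
  have hWtop : W = ⊤ := by
    rw [eq_top_iff]
    intro x _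
    rcases hgen x with rfl | ⟨n, rfl⟩
    · exact W.zero_mem
    · exact hallpow n
  rw [eq_top_iff, ← hWtop, hW]
  refine Submodule.span_mono ?_
  rintro _ ⟨⟨u, hu⟩, rfl⟩
  exact ⟨⟨u, lt_of_lt_of_le hu (Nat.lt_succ_iff.mp M.isLt)⟩, rfl⟩

private lemma field_deBruijn (F K : Type) [Field F] [Fintype F] [Field K] [Fintype K]
    [Algebra F K] (e ℓ : ℕ) (he : 1 ≤ e) (hl : 1 ≤ ℓ)
    (hrank : Module.finrank F K = e * ℓ) :
    ∃ y : ZMod (Fintype.card K - 1) → (Fin e → F),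
      (Function.Injective
        (fun j : ZMod (Fintype.card K - 1) => fun s : Fin ℓ => y (j + (s : ℕ)))) ∧
      (∀ j, (fun s : Fin ℓ => y (j + (s : ℕ))) ≠ (fun _ => fun _ => 0)) := by
  classical
  set n := e * ℓ with hn
  set m := Fintype.card K - 1 with hm
  have hK2 : 2 ≤ Fintype.card K := Fintype.one_lt_card
  have hm1 : m + 1 = Fintype.card K := by omega
  haveI : NeZero m := ⟨by omega⟩
  obtain ⟨u, hu⟩ := IsCyclic.exists_generator (α := Kˣ)
  set α : K := (u : K) with hα
  have hαne : α ≠ 0 := Units.ne_zero u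
  have horder : orderOf u = m := by
    rw [orderOf_eq_card_of_forall_mem_zpowers hu, Nat.card_units, Nat.card_eq_fintype_card]
  have hgen : ∀ x : K, x = 0 ∨ ∃ k : ℕ, x = α ^ k := by
    intro x
    by_cases hx : x = 0
    · exact Or.inl hx
    · right
      obtain ⟨k, hk⟩ := mem_powers_iff_mem_zpowers.mpr (hu (Units.mk0 x hx))
      refine ⟨k, ?_⟩
      have := congrArg (Units.val) hk
      rw [Units.val_mk0] at this
      rw [← this]
      push_cast
      rfl
  have hspan := span_powers_top (F := F) α hgen
  rw [hrank] at hspan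
  have hnpos : 0 < Module.finrank F K := by rw [hrank, hn]; positivity
  set b := Module.finBasis F K with hb
  set ψ : K →ₗ[F] F := b.coord ⟨0, hnpos⟩ with hψ
  have hψb : ψ (b ⟨0, hnpos⟩) = 1 := by simp [hψ, Basis.coord_apply]
  have hψne : ψ (b ⟨0, hnpos⟩) ≠ 0 := by rw [hψb]; exact one_ne_zero
  have hpair : ∀ x : K, (∀ u' : ℕ, u' < n → ψ (α ^ u' * x) = 0) → x = 0 := by
    intro x hx
    by_contra hx0
    have hall : ∀ v : K, ψ (v * x) = 0 := by
      intro v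
      have hv : v ∈ Submodule.span F (Set.range fun u : Fin n => α ^ (u : ℕ)) := by
        rw [hspan]; trivial
      induction hv using Submodule.span_induction with
      | mem y hy =>
        obtain ⟨⟨u', hu'⟩, rfl⟩ := hy
        exact hx u' hu'
      | zero => simp
      | add y z _ _ hy hz => rw [add_mul, map_add, hy, hz, add_zero]
      | smul c y _ hy => rw [smul_mul_assoc, map_smul, hy, smul_zero]
    have : ψ (b ⟨0, hnpos⟩) = 0 := by
      have := hall (b ⟨0, hnpos⟩ * x⁻¹)
      rwa [mul_assoc, inv_mul_cancel₀ hx0, mul_one] at this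
    exact hψne this
  -- the punctured sequence
  set g : ZMod m → K := fun j => ((u ^ j.val : Kˣ) : K) with hg
  have hgadd : ∀ (j : ZMod m) (s : ℕ), g (j + (s : ℕ)) = g j * α ^ s := by
    intro j s
    have huu : u ^ (j + (s : ℕ)).val = u ^ (j.val + s) := by
      apply pow_eq_pow_iff_modEq.mpr
      rw [horder]
      calc (j + (s : ℕ)).val = (j.val + ((s : ℕ) : ZMod m).val) % m := by
            rw [ZMod.val_add]
        _ ≡ j.val + ((s : ℕ) : ZMod m).val [MOD m] := Nat.mod_modEq _ m
        _ ≡ j.val + s [MOD m] := by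
            apply Nat.ModEq.add_left
            rw [ZMod.val_natCast]
            exact Nat.mod_modEq s m
    rw [hg]
    simp only
    rw [huu, pow_add]
    push_cast
    rfl
  have hgne : ∀ j, g j ≠ 0 := fun j => Units.ne_zero _
  have hginj : Function.Injective g := by
    intro j j' hjj
    have huu : u ^ j.val = u ^ j'.val := Units.ext hjj
    have := pow_eq_pow_iff_modEq.mp huu
    rw [horder] at this
    apply ZMod.val_injective
    have h1 := this
    unfold Nat.ModEq at h1
    rwa [Nat.mod_eq_of_lt (ZMod.val_lt j), Nat.mod_eq_of_lt (ZMod.val_lt j')] at h1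
  -- window value identity
  have hwin : ∀ (j : ZMod m) (u' : ℕ),
      ψ (α ^ ((u' / ℓ) * ℓ) * g (j + ((u' % ℓ : ℕ) : ZMod m))) = ψ (α ^ u' * g j) := by
    intro j u'
    rw [hgadd]
    congr 1
    have hd : ℓ * (u' / ℓ) + u' % ℓ = u' := Nat.div_add_mod u' ℓ
    calc α ^ ((u' / ℓ) * ℓ) * (g j * α ^ (u' % ℓ))
        = α ^ ((u' / ℓ) * ℓ + u' % ℓ) * g j := by ring
      _ = α ^ u' * g j := by rw [mul_comm (u' / ℓ) ℓ, hd]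
  have hfin : ∀ (u' : ℕ), u' < n → (u' % ℓ < ℓ ∧ u' / ℓ < e) := by
    intro u' hu'
    constructor
    · exact Nat.mod_lt _ (by omega)
    · apply Nat.div_lt_of_lt_mul
      rw [mul_comm]; exact hu'
  refine ⟨fun j => fun i => ψ (α ^ ((i : ℕ) * ℓ) * g j), ?_, ?_⟩
  · intro j j' hjj
    apply hginj
    apply sub_eq_zero.mp
    apply hpair
    intro u' hu'
    obtain ⟨h1, h2⟩ := hfin u' hu'
    have := congrFun (congrFun hjj ⟨u' % ℓ, h1⟩) ⟨u' / ℓ, h2⟩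
    simp only at this
    rw [mul_sub, map_sub, ← hwin j u', ← hwin j' u', this, sub_self]
  · intro j hj
    apply hgne j
    apply hpair
    intro u' hu'
    obtain ⟨h1, h2⟩ := hfin u' hu'
    have := congrFun (congrFun hj ⟨u' % ℓ, h1⟩) ⟨u' / ℓ, h2⟩
    simp only at this
    rw [← hwin j u', this]

private lemma insert_deBruijn {A : Type} [DecidableEq A] [Fintype A] (a₀ a₁ : A)
    (hne : a₁ ≠ a₀) (ℓ m : ℕ) [NeZero m] (hl : 1 ≤ ℓ)
    (hcard : m + 1 = Fintype.card A ^ ℓ) (y : ZMod m → A)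
    (hinj : Function.Injective (fun j : ZMod m => fun s : Fin ℓ => y (j + (s : ℕ))))
    (hnz : ∀ j, (fun s : Fin ℓ => y (j + (s : ℕ))) ≠ fun _ => a₀) :
    ∃ D : ZMod (m + 1) → A,
      Function.Injective (fun j : ZMod (m + 1) => fun s : Fin ℓ => D (j + (s : ℕ))) := by
  classical
  haveI : Nontrivial A := ⟨a₁, a₀, hne⟩
  have hA2 : 2 ≤ Fintype.card A := Fintype.one_lt_card
  have hlm : ℓ < m + 1 := by
    have h2 : ℓ < 2 ^ ℓ := Nat.lt_two_pow_self
    have h3 : 2 ^ ℓ ≤ Fintype.card A ^ ℓ := Nat.pow_le_pow_left hA2 ℓ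
    omega
  set W := (Fin ℓ → A) with hW
  set Y : ZMod m → W := fun j => fun s : Fin ℓ => y (j + (s : ℕ)) with hY
  -- surjectivity onto non-(const a₀) words
  set w₀ : W := fun s => if (s : ℕ) + 1 = ℓ then a₁ else a₀ with hw₀
  have hw₀ne : w₀ ≠ fun _ => a₀ := by
    intro h
    have := congrFun h ⟨ℓ - 1, by omega⟩
    simp only [hw₀] at this
    rw [if_pos (by omega)] at this
    exact hne this
  obtain ⟨j₀, hj₀⟩ : ∃ j₀, Y j₀ = w₀ := by
    set T : Finset W := Finset.univ.filter (fun w => w ≠ fun _ => a₀) with hT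
    have hTcard : T.card = m := by
      rw [hT, Finset.filter_ne', Finset.card_erase_of_mem (Finset.mem_univ _),
        Finset.card_univ]
      have : Fintype.card W = Fintype.card A ^ ℓ := by
        simp [hW, Fintype.card_fun]
      omega
    have himsub : Finset.univ.image Y ⊆ T := by
      intro w hw
      obtain ⟨j, _, rfl⟩ := Finset.mem_image.mp hw
      simp only [hT, Finset.mem_filter, Finset.mem_univ, true_and]
      exact hnz j
    have himcard : (Finset.univ.image Y).card = m := by
      rw [Finset.card_image_of_injective _ hinj, Finset.card_univ, ZMod.card]
    have : T = Finset.univ.image Y :=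
      (Finset.eq_of_subset_of_card_le himsub (by omega)).symm
    have hw₀T : w₀ ∈ T := by
      simp only [hT, Finset.mem_filter, Finset.mem_univ, true_and]
      exact hw₀ne
    rw [this] at hw₀T
    obtain ⟨j₀, _, h⟩ := Finset.mem_image.mp hw₀T
    exact ⟨j₀, h⟩
  set y' : ZMod m → A := fun j => y (j₀ + j) with hy'
  have hY' : ∀ j, (fun s : Fin ℓ => y' (j + (s : ℕ))) = Y (j₀ + j) := by
    intro j
    funext s
    simp only [hy', hY, add_assoc]
  have hy'inj : Function.Injective (fun j : ZMod m => fun s : Fin ℓ => y' (j + (s : ℕ))) := by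
    intro j j' h
    have h2 : Y (j₀ + j) = Y (j₀ + j') := by
      rw [← hY' j, ← hY' j']; exact h
    exact add_left_cancel (hinj h2)
  have hy'nz : ∀ j, (fun s : Fin ℓ => y' (j + (s : ℕ))) ≠ fun _ => a₀ := by
    intro j
    rw [hY' j]
    exact hnz _
  have hrun : ∀ s : ℕ, s + 1 < ℓ → y' ((s : ℕ) : ZMod m) = a₀ := by
    intro s hs
    have : y' ((s : ℕ) : ZMod m) = Y j₀ ⟨s, by omega⟩ := rfl
    rw [this, hj₀]
    show (if s + 1 = ℓ then a₁ else a₀) = a₀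
    exact if_neg (by omega)
  -- the inserted sequence
  set D : ZMod (m + 1) → A := fun x => if x = 0 then a₀ else y' ((x.val - 1 : ℕ)) with hD
  have hDnat : ∀ a : ℕ, a ≤ m → D ((a : ℕ) : ZMod (m + 1)) =
      if a = 0 then a₀ else y' ((a - 1 : ℕ)) := by
    intro a ha
    have hval : ((a : ℕ) : ZMod (m + 1)).val = a := ZMod.val_cast_of_lt (by omega)
    by_cases h : a = 0
    · subst h; simp [hD]
    · rw [hD]
      simp only
      rw [if_neg (by
        intro h0
        apply h
        rw [← hval, h0, ZMod.val_zero]), hval, if_neg h]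
  have hkey : ∀ P s : ℕ, 1 ≤ P → P ≤ m → s < ℓ →
      D ((P : ZMod (m + 1)) + (s : ℕ)) = y' (((P - 1 + s : ℕ) : ZMod m)) := by
    intro P s hP1 hPm hs
    have hcast : (P : ZMod (m + 1)) + ((s : ℕ) : ZMod (m + 1)) = ((P + s : ℕ) : ZMod (m + 1)) := by
      push_cast; ring
    rw [hcast]
    by_cases h1 : P + s ≤ m
    · rw [hDnat (P + s) h1, if_neg (by omega)]
      congr 2
      omega
    · have h3 : 1 ≤ s := by omega
      have hl2 : 2 ≤ ℓ := by omega
      set v := P + s - (m + 1) with hv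
      have hPs : P + s = (m + 1) + v := by omega
      have hvle : v ≤ ℓ - 2 := by omega
      have hLHS : ((P + s : ℕ) : ZMod (m + 1)) = ((v : ℕ) : ZMod (m + 1)) := by
        rw [hPs]; push_cast; simp
      have hRHS : ((P - 1 + s : ℕ) : ZMod m) = ((v : ℕ) : ZMod m) := by
        have hme : P - 1 + s = m + v := by omega
        rw [hme]; push_cast; simp
      rw [hLHS, hRHS, hDnat v (by omega)]
      by_cases hv0 : v = 0
      · rw [if_pos hv0, hv0]
        exact (hrun 0 (by omega)).symm
      · rw [if_neg hv0, hrun (v - 1) (by omega), hrun v (by omega)]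
  have h0win : (fun s : Fin ℓ => D (0 + (s : ℕ))) = fun _ => a₀ := by
    funext s
    have hs := s.isLt
    rw [zero_add, hDnat (s : ℕ) (by omega)]
    by_cases h : (s : ℕ) = 0
    · rw [if_pos h]
    · rw [if_neg h]
      exact hrun ((s : ℕ) - 1) (by omega)
  have hval1 : ∀ x : ZMod (m + 1), x ≠ 0 → 1 ≤ x.val := by
    intro x hx
    by_contra h
    have h0 : x.val = 0 := by omega
    exact hx ((ZMod.val_eq_zero x).mp h0)
  have hwinpos : ∀ x : ZMod (m + 1), x ≠ 0 →
      (fun s : Fin ℓ => D (x + (s : ℕ))) =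
        (fun s : Fin ℓ => y' (((x.val - 1 : ℕ) : ZMod m) + (s : ℕ))) := by
    intro x hx
    funext s
    have hv1 : 1 ≤ x.val := hval1 x hx
    have hxcast : ((x.val : ℕ) : ZMod (m + 1)) = x := ZMod.natCast_rightInverse x
    rw [show x + ((s : ℕ) : ZMod (m + 1)) = ((x.val : ℕ) : ZMod (m + 1)) + ((s : ℕ) : ZMod (m + 1)) by
      rw [hxcast]]
    rw [hkey x.val s hv1 (by have := ZMod.val_lt x; omega) s.isLt]
    congr 1
    push_cast
    ring
  refine ⟨D, ?_⟩
  intro x x' h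
  simp only at h
  by_cases hx : x = 0 <;> by_cases hx' : x' = 0
  · rw [hx, hx']
  · exfalso
    rw [hx, h0win, hwinpos x' hx'] at h
    exact hy'nz _ h.symm
  · exfalso
    rw [hx', h0win, hwinpos x hx] at h
    exact hy'nz _ h
  · rw [hwinpos x hx, hwinpos x' hx'] at h
    have := hy'inj h
    have hv : ((x.val - 1 : ℕ) : ZMod m).val = x.val - 1 :=
      ZMod.val_cast_of_lt (by have := ZMod.val_lt x; omega)
    have hv' : ((x'.val - 1 : ℕ) : ZMod m).val = x'.val - 1 :=
      ZMod.val_cast_of_lt (by have := ZMod.val_lt x'; omega)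
    have hvv : x.val - 1 = x'.val - 1 := by
      rw [← hv, ← hv', this]
    apply ZMod.val_injective
    have h1 := hval1 x hx
    have h1' := hval1 x' hx'
    omega

private lemma deBruijn_map {A B : Type} (g : A → B) (hg : Function.Injective g) {M ℓ : ℕ}
    (D : ZMod M → A)
    (h : Function.Injective (fun j : ZMod M => fun s : Fin ℓ => D (j + (s : ℕ)))) :
    Function.Injective (fun j : ZMod M => fun s : Fin ℓ => (g ∘ D) (j + (s : ℕ))) := by
  intro x x' hxx
  apply h
  funext s
  exact hg (congrFun hxx s)

private lemma primePow_deBruijn (p e ℓ : ℕ) (hp : p.Prime) (he : 1 ≤ e) (hl : 1 ≤ ℓ) :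
    ∃ D : ZMod ((p ^ e) ^ ℓ) → Fin (p ^ e),
      Function.Injective
        (fun j : ZMod ((p ^ e) ^ ℓ) => fun s : Fin ℓ => D (j + (s : ℕ))) := by
  classical
  haveI := Fact.mk hp
  haveI : Fintype (GaloisField p (e * ℓ)) := Fintype.ofFinite _
  have hrank : Module.finrank (ZMod p) (GaloisField p (e * ℓ)) = e * ℓ := by
    have h1 : Fintype.card (GaloisField p (e * ℓ)) =
        Fintype.card (ZMod p) ^ Module.finrank (ZMod p) (GaloisField p (e * ℓ)) :=
      card_eq_pow_finrank
    have h2 : Fintype.card (GaloisField p (e * ℓ)) = p ^ (e * ℓ) := by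
      rw [← Nat.card_eq_fintype_card]
      exact GaloisField.card p (e * ℓ) (by positivity)
    rw [h2, ZMod.card] at h1
    exact (Nat.pow_right_injective hp.two_le h1.symm)
  have hcardK : Fintype.card (GaloisField p (e * ℓ)) = p ^ (e * ℓ) := by
    rw [← Nat.card_eq_fintype_card]
    exact GaloisField.card p (e * ℓ) (by positivity)
  have hp2 : 2 ≤ p ^ (e * ℓ) := by
    calc 2 ≤ p := hp.two_le
    _ = p ^ 1 := (pow_one p).symm
    _ ≤ p ^ (e * ℓ) := Nat.pow_le_pow_right hp.pos (Nat.mul_le_mul he hl)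
  set m := Fintype.card (GaloisField p (e * ℓ)) - 1 with hm
  haveI : NeZero m := ⟨by omega⟩
  obtain ⟨y, hinj, hnz⟩ :=
    field_deBruijn (ZMod p) (GaloisField p (e * ℓ)) e ℓ he hl hrank
  have hcardA : Fintype.card (Fin e → ZMod p) = p ^ e := by
    simp [ZMod.card]
  have hm1 : m + 1 = Fintype.card (Fin e → ZMod p) ^ ℓ := by
    rw [hcardA, ← pow_mul]
    omega
  have hne : (fun _ : Fin e => (1 : ZMod p)) ≠ (fun _ => (0 : ZMod p)) := by
    intro h
    exact one_ne_zero (congrFun h ⟨0, he⟩)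
  obtain ⟨D, hD⟩ := insert_deBruijn (fun _ : Fin e => (0 : ZMod p))
    (fun _ => (1 : ZMod p)) hne ℓ m hl hm1 y hinj hnz
  have hMM : (p ^ e) ^ ℓ = m + 1 := by
    rw [← pow_mul]
    omega
  rw [hMM]
  have hcardA' : Fintype.card (Fin e → ZMod p) = p ^ e := hcardA
  exact ⟨_, deBruijn_map (Fintype.equivFinOfCardEq hcardA') (Equiv.injective _) D hD⟩

private lemma mul_deBruijn {q1 q2 M1 M2 ℓ : ℕ} [NeZero M1] [NeZero M2]
    (h : Nat.Coprime M1 M2)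
    (D1 : ZMod M1 → Fin q1)
    (h1 : Function.Injective (fun j : ZMod M1 => fun s : Fin ℓ => D1 (j + (s : ℕ))))
    (D2 : ZMod M2 → Fin q2)
    (h2 : Function.Injective (fun j : ZMod M2 => fun s : Fin ℓ => D2 (j + (s : ℕ)))) :
    ∃ D : ZMod (M1 * M2) → Fin (q1 * q2),
      Function.Injective (fun j : ZMod (M1 * M2) => fun s : Fin ℓ => D (j + (s : ℕ))) := by
  haveI : NeZero (M1 * M2) := ⟨by
    have := NeZero.ne M1; have := NeZero.ne M2; positivity⟩
  set c1 : ZMod (M1 * M2) →+* ZMod M1 := ZMod.castHom (dvd_mul_right M1 M2) _ with hc1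
  set c2 : ZMod (M1 * M2) →+* ZMod M2 := ZMod.castHom (dvd_mul_left M2 M1) _ with hc2
  have hker : ∀ x : ZMod (M1 * M2), c1 x = 0 → c2 x = 0 → x = 0 := by
    intro x hx1 hx2
    have hv1 : ((x.val : ℕ) : ZMod M1) = 0 := by
      rw [ZMod.natCast_val, ← ZMod.castHom_apply (h := dvd_mul_right M1 M2)]
      exact hx1
    have hv2 : ((x.val : ℕ) : ZMod M2) = 0 := by
      rw [ZMod.natCast_val, ← ZMod.castHom_apply (h := dvd_mul_left M2 M1)]
      exact hx2
    have d1 : M1 ∣ x.val := (ZMod.natCast_eq_zero_iff _ _).mp hv1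
    have d2 : M2 ∣ x.val := (ZMod.natCast_eq_zero_iff _ _).mp hv2
    have hdvd := Nat.Coprime.mul_dvd_of_dvd_of_dvd h d1 d2
    have hlt := ZMod.val_lt x
    exact (ZMod.val_eq_zero x).mp (Nat.eq_zero_of_dvd_of_lt hdvd hlt)
  refine ⟨fun x => (finProdFinEquiv (⟨D1 (c1 x), D2 (c2 x)⟩ : Fin q1 × Fin q2)), ?_⟩
  intro x x' hxx
  have hcomp : ∀ s : Fin ℓ, D1 (c1 x + (s : ℕ)) = D1 (c1 x' + (s : ℕ)) ∧
      D2 (c2 x + (s : ℕ)) = D2 (c2 x' + (s : ℕ)) := by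
    intro s
    have := congrFun hxx s
    simp only at this
    have h' := finProdFinEquiv.injective this
    rw [Prod.mk.injEq] at h'
    simp only [map_add, map_natCast] at h'
    exact h'
  have e1 : c1 x = c1 x' := h1 (funext fun s => (hcomp s).1)
  have e2 : c2 x = c2 x' := h2 (funext fun s => (hcomp s).2)
  have : c1 (x - x') = 0 := by rw [map_sub, e1, sub_self]
  have h2' : c2 (x - x') = 0 := by rw [map_sub, e2, sub_self]
  have := hker _ this h2'
  exact sub_eq_zero.mp this

private lemma deBruijn_exists (q ℓ : ℕ) (hq : 1 ≤ q) :
    ∃ D : ZMod (q ^ ℓ) → Fin q,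
      Function.Injective (fun j : ZMod (q ^ ℓ) => fun s : Fin ℓ => D (j + (s : ℕ))) := by
  rcases Nat.eq_zero_or_pos ℓ with rfl | hl
  · refine ⟨fun _ => ⟨0, hq⟩, ?_⟩
    intro x x' _
    haveI : Subsingleton (ZMod (q ^ 0)) := by
      rw [pow_zero]
      infer_instance
    exact Subsingleton.elim x x'
  · induction q using Nat.strong_induction_on with
    | _ q IH =>
    by_cases hq1 : q = 1
    · subst hq1
      haveI : Subsingleton (ZMod (1 ^ ℓ)) := by
        rw [one_pow]
        infer_instance
      refine ⟨fun _ => ⟨0, by omega⟩, ?_⟩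
      intro x x' _
      exact Subsingleton.elim x x'
    · have hq2 : 2 ≤ q := by omega
      have hp : q.minFac.Prime := Nat.minFac_prime hq1
      set p := q.minFac with hp'
      set e := q.factorization p with he'
      set a := p ^ e with ha'
      set b := q / a with hb'
      have hab : a * b = q := Nat.ordProj_mul_ordCompl_eq_self q p
      have he1 : 1 ≤ e :=
        hp.factorization_pos_of_dvd (by omega) (Nat.minFac_dvd q)
      have hap : 2 ≤ a := by
        calc 2 ≤ p := hp.two_le
        _ ≤ p ^ e := Nat.le_self_pow (by omega) p
      by_cases hbq : b = 1
      · have hqa : q = p ^ e := by rw [← hab, hbq, mul_one]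
        rw [hqa]
        exact primePow_deBruijn p e ℓ hp he1 hl
      · have hb1 : 1 ≤ b := Nat.ordCompl_pos p (by omega)
        have hb2 : 2 ≤ b := by omega
        have hblt : b < q := Nat.div_lt_self (by omega) (by omega)
        have hcop : Nat.Coprime a b := by
          apply Nat.Coprime.pow_left
          exact Nat.coprime_ordCompl hp (by omega)
        obtain ⟨Da, hDa⟩ := primePow_deBruijn p e ℓ hp he1 hl
        obtain ⟨Db, hDb⟩ := IH b hblt hb1
        haveI : NeZero (a ^ ℓ) := ⟨by positivity⟩
        haveI : NeZero (b ^ ℓ) := ⟨by positivity⟩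
        obtain ⟨D, hD⟩ := mul_deBruijn (hcop.pow ℓ ℓ) Da hDa Db hDb
        rw [← hab, mul_pow]
        exact ⟨D, hD⟩

section Construction

variable (q ℓ t : ℕ)

private abbrev GoodFun : Type := {f : ZMod (t * q ^ ℓ) → ZMod (q ^ ℓ) // ∀ j, f (j + (t : ℕ)) = f j + 1}

variable {q ℓ t}

private lemma goodFun_iter (f : GoodFun q ℓ t) (j : ZMod (t * q ^ ℓ)) (m : ℕ) :
    f.1 (j + ((m * t : ℕ) : ZMod (t * q ^ ℓ))) = f.1 j + (m : ZMod (q ^ ℓ)) := by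
  induction m with
  | zero => simp
  | succ m ih =>
    have h1 : ((m + 1) * t : ℕ) = m * t + t := by ring
    rw [h1]
    push_cast
    rw [← add_assoc]
    have := f.2 (j + ((m * t : ℕ) : ZMod (t * q ^ ℓ)))
    push_cast at this ih
    rw [this, ih]
    ring
  
private lemma goodFun_back (f : GoodFun q ℓ t) (j : ZMod (t * q ^ ℓ)) :
    f.1 (j - ((t : ℕ) : ZMod (t * q ^ ℓ))) = f.1 j - 1 := by
  have := f.2 (j - ((t : ℕ) : ZMod (t * q ^ ℓ)))
  rw [sub_add_cancel] at this
  rw [this]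
  ring

private lemma goodFun_iterZ (f : GoodFun q ℓ t) (z : ℤ) (j : ZMod (t * q ^ ℓ)) :
    f.1 (j + ((z * t : ℤ) : ZMod (t * q ^ ℓ))) = f.1 j + ((z : ℤ) : ZMod (q ^ ℓ)) := by
  induction z using Int.induction_on with
  | zero => simp
  | succ z ih =>
    have h1 : ((z + 1) * t : ℤ) = z * t + t := by ring
    rw [h1]
    push_cast
    rw [← add_assoc]
    have := f.2 (j + ((z * t : ℤ) : ZMod (t * q ^ ℓ)))
    push_cast at this ih ⊢
    rw [this, ih]
    ring
  | pred z ih =>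
    have h1 : ((-z - 1) * t : ℤ) = -z * t - t := by ring
    rw [h1]
    push_cast
    rw [← add_sub_assoc]
    have := goodFun_back f (j + ((-z * t : ℤ) : ZMod (t * q ^ ℓ)))
    push_cast at this ih ⊢
    rw [this, ih]
    ring

private lemma goodFun_shift_iter (f : GoodFun q ℓ t) (c : ZMod (t * q ^ ℓ))
    (hc : ∀ j, f.1 (j + c) = f.1 j) (z : ℤ) (j : ZMod (t * q ^ ℓ)) :
    f.1 (j + (z : ZMod (t * q ^ ℓ)) * c) = f.1 j := by
  have hcback : ∀ j, f.1 (j - c) = f.1 j := by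
    intro j
    have := hc (j - c)
    rw [sub_add_cancel] at this
    exact this.symm
  induction z using Int.induction_on with
  | zero => simp
  | succ z ih =>
    push_cast at ih ⊢
    rw [add_mul, one_mul, ← add_assoc, hc, ih]
  | pred z ih =>
    push_cast at ih ⊢
    rw [sub_mul, one_mul, ← add_sub_assoc, hcback, ih]

end Construction

section Free

variable {q ℓ t : ℕ}

private lemma goodFun_free (hq : 2 ≤ q) (hℓ : 1 ≤ ℓ) (ht : 1 ≤ t)
    (hfac : ∀ p : ℕ, p.Prime → p ∣ t → p ∣ q)
    (f : GoodFun q ℓ t) (c : ZMod (t * q ^ ℓ))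
    (hc : ∀ j, f.1 (j + c) = f.1 j) : c = 0 := by
  have hQ2 : 2 ≤ q ^ ℓ := by
    calc 2 ≤ q := hq
    _ = q ^ 1 := (pow_one q).symm
    _ ≤ q ^ ℓ := Nat.pow_le_pow_right (by omega) hℓ
  have hk1 : 1 ≤ t * q ^ ℓ := Nat.mul_pos (by omega) (by omega)
  haveI : NeZero (q ^ ℓ) := ⟨by omega⟩
  haveI : NeZero (t * q ^ ℓ) := ⟨by omega⟩
  set nn := c.val with hnn
  have hcc : ((nn : ℕ) : ZMod (t * q ^ ℓ)) = c := ZMod.natCast_rightInverse c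
  set d := Nat.gcd nn t with hd
  have hdt : d ∣ t := Nat.gcd_dvd_right nn t
  obtain ⟨t', htd⟩ := hdt
  set A := Nat.gcdA nn t with hA
  set B := Nat.gcdB nn t with hB
  have hbez : (d : ℤ) = nn * A + t * B := Nat.gcd_eq_gcd_ab nn t
  have hstep : ∀ j, f.1 (j + ((d : ℕ) : ZMod (t * q ^ ℓ)))
      = f.1 j + ((B : ℤ) : ZMod (q ^ ℓ)) := by
    intro j
    have h1 : ((d : ℕ) : ZMod (t * q ^ ℓ)) =
        (A : ZMod (t * q ^ ℓ)) * c + ((B * t : ℤ) : ZMod (t * q ^ ℓ)) := by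
      rw [← hcc]
      have h2 : ((d : ℤ) : ZMod (t * q ^ ℓ)) = ((nn * A + t * B : ℤ) : ZMod (t * q ^ ℓ)) := by
        exact_mod_cast congrArg (fun z : ℤ => (z : ZMod (t * q ^ ℓ))) hbez
      push_cast at h2 ⊢
      rw [h2]
      ring
    rw [h1, ← add_assoc, goodFun_iterZ f B (j + (A : ZMod (t * q ^ ℓ)) * c),
      goodFun_shift_iter f c hc A j]
  have hstep_iter : ∀ (mm : ℕ) (j), f.1 (j + ((d * mm : ℕ) : ZMod (t * q ^ ℓ)))
      = f.1 j + (mm : ZMod (q ^ ℓ)) * ((B : ℤ) : ZMod (q ^ ℓ)) := by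
    intro mm
    induction mm with
    | zero => simp
    | succ mm ih =>
      intro j
      have h1 : (d * (mm + 1) : ℕ) = d * mm + d := by ring
      rw [h1]
      push_cast
      rw [← add_assoc]
      have h2 := hstep (j + ((d * mm : ℕ) : ZMod (t * q ^ ℓ)))
      push_cast at h2 ih ⊢
      rw [h2, ih]
      ring
  have hunit : ((t' : ℕ) : ZMod (q ^ ℓ)) * ((B : ℤ) : ZMod (q ^ ℓ)) = 1 := by
    have h1 := hstep_iter t' 0
    rw [← htd] at h1
    have h2 := f.2 (0 : ZMod (t * q ^ ℓ))
    rw [h1] at h2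
    exact (add_left_cancel h2)
  have ht'1 : t' = 1 := by
    by_contra h
    have ht'pos : 1 ≤ t' := by
      rcases Nat.eq_zero_or_pos t' with h0 | h0
      · rw [h0, mul_zero] at htd; omega
      · exact h0
    have hpp : t'.minFac.Prime := Nat.minFac_prime h
    set pp := t'.minFac with hppdef
    have hppq : pp ∣ q := hfac pp hpp ((Nat.minFac_dvd t').trans ⟨d, by rw [htd]; ring⟩)
    have hppQ : (pp : ℤ) ∣ ((q ^ ℓ : ℕ) : ℤ) := by
      exact_mod_cast Int.natCast_dvd_natCast.mpr (dvd_pow hppq (by omega))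
    have hdvd1 : ((q ^ ℓ : ℕ) : ℤ) ∣ ((t' : ℤ) * B - 1) := by
      rw [← ZMod.intCast_zmod_eq_zero_iff_dvd]
      push_cast
      push_cast at hunit
      rw [hunit]
      ring
    have hppt' : (pp : ℤ) ∣ (t' : ℤ) * B :=
      Dvd.dvd.mul_right (Int.natCast_dvd_natCast.mpr (Nat.minFac_dvd t')) B
    have hpp1 : (pp : ℤ) ∣ 1 := by
      have h3 : (t' : ℤ) * B - ((t' : ℤ) * B - 1) = 1 := by ring
      rw [← h3]
      exact dvd_sub hppt' (hppQ.trans hdvd1)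
    have h4 := Int.le_of_dvd one_pos hpp1
    have h5 : pp ≤ 1 := by exact_mod_cast h4
    have := hpp.two_le
    omega
  rw [ht'1, mul_one] at htd
  have htnn : t ∣ nn := by rw [htd]; exact Nat.gcd_dvd_left nn t
  obtain ⟨ss, hss⟩ := htnn
  have h3 := goodFun_iter f 0 ss
  have h4 : f.1 ((0 : ZMod (t * q ^ ℓ)) + ((ss * t : ℕ) : ZMod (t * q ^ ℓ)))
      = f.1 0 := by
    rw [show (ss * t : ℕ) = nn by rw [hss]; ring, hcc]
    exact hc 0
  rw [h4] at h3
  have h5 : ((ss : ℕ) : ZMod (q ^ ℓ)) = 0 := by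
    have := (left_eq_add).mp h3
    exact this
  have h6 : q ^ ℓ ∣ ss := (ZMod.natCast_eq_zero_iff _ _).mp h5
  have hlt : nn < t * q ^ ℓ := ZMod.val_lt c
  have hss0 : ss = 0 := by
    by_contra hss0
    have : q ^ ℓ ≤ ss := Nat.le_of_dvd (by omega) h6
    have : t * q ^ ℓ ≤ t * ss := Nat.mul_le_mul_left t this
    omega
  rw [← hcc, hss, hss0, mul_zero, Nat.cast_zero]

private lemma idx_lt {t ℓ : ℕ} (r m : ℕ) (hr : r < t) (hm : m < ℓ) : r + m * t < t * ℓ := by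
  have h1 : (m + 1) * t ≤ ℓ * t := Nat.mul_le_mul_right t (by omega)
  rw [mul_comm t ℓ]
  have h2 : r + m * t < (m + 1) * t := by
    have : (m + 1) * t = m * t + t := by ring
    omega
  omega

private lemma goodFun_decode (hq : 2 ≤ q) (hℓ : 1 ≤ ℓ) (ht : 1 ≤ t)
    (D : ZMod (q ^ ℓ) → Fin q)
    (hD : Function.Injective (fun j : ZMod (q ^ ℓ) => fun s : Fin ℓ => D (j + (s : ℕ))))
    (f g : GoodFun q ℓ t) (a b : ZMod (t * q ^ ℓ))
    (h : (fun s : Fin (t * ℓ) => D (f.1 (a + (s : ℕ))))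
        = (fun s : Fin (t * ℓ) => D (g.1 (b + (s : ℕ))))) :
    ∀ w : ZMod (t * q ^ ℓ), f.1 (a + w) = g.1 (b + w) := by
  haveI : NeZero (t * q ^ ℓ) := ⟨by
    have : 0 < q ^ ℓ := by positivity
    have : 0 < t * q ^ ℓ := Nat.mul_pos (by omega) this
    omega⟩
  have hstep1 : ∀ r : ℕ, r < t → f.1 (a + (r : ℕ)) = g.1 (b + (r : ℕ)) := by
    intro r hr
    apply hD
    funext m
    have hidx : r + (m : ℕ) * t < t * ℓ := idx_lt r (m : ℕ) hr m.isLt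
    have h2 := congrFun h ⟨r + (m : ℕ) * t, hidx⟩
    simp only at h2
    have h3 : ∀ x : ZMod (t * q ^ ℓ),
        x + ((r + (m : ℕ) * t : ℕ) : ZMod (t * q ^ ℓ)) =
          (x + ((r : ℕ) : ZMod (t * q ^ ℓ))) + (((m : ℕ) * t : ℕ) : ZMod (t * q ^ ℓ)) := by
      intro x; push_cast; ring
    rw [h3 a, h3 b, goodFun_iter f _ (m : ℕ), goodFun_iter g _ (m : ℕ)] at h2
    exact h2
  intro w
  have hw : ((w.val % t + (w.val / t) * t : ℕ) : ZMod (t * q ^ ℓ)) = w := by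
    rw [show w.val % t + w.val / t * t = w.val from Nat.mod_add_div' w.val t]
    exact ZMod.natCast_rightInverse w
  rw [← hw]
  have h5 : ∀ x : ZMod (t * q ^ ℓ),
      x + ((w.val % t + (w.val / t) * t : ℕ) : ZMod (t * q ^ ℓ)) =
        (x + ((w.val % t : ℕ) : ZMod (t * q ^ ℓ))) + (((w.val / t) * t : ℕ) : ZMod (t * q ^ ℓ)) := by
    intro x; push_cast; ring
  rw [h5 a, h5 b, goodFun_iter f _ (w.val / t), goodFun_iter g _ (w.val / t),
    hstep1 (w.val % t) (Nat.mod_lt _ (by omega))]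

end Free

private lemma ebug_construction {q ℓ t : ℕ} (hq : 2 ≤ q) (hℓ : 1 ≤ ℓ) (ht : 1 ≤ t)
    (hfac : ∀ p : ℕ, p.Prime → p ∣ t → p ∣ q) :
    ∃ n₀ : ℕ, n₀ * (t * q ^ ℓ) = q ^ (t * ℓ) ∧
      ∃ c : Fin n₀ → ZMod (t * q ^ ℓ) → Fin q, ebugValid q (t * q ^ ℓ) (t * ℓ) n₀ c := by
  classical
  obtain ⟨D, hD⟩ := deBruijn_exists q ℓ (by omega)
  have hQ2 : 2 ≤ q ^ ℓ := by
    calc 2 ≤ q := hq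
    _ = q ^ 1 := (pow_one q).symm
    _ ≤ q ^ ℓ := Nat.pow_le_pow_right (by omega) hℓ
  haveI : NeZero (q ^ ℓ) := ⟨by omega⟩
  haveI : NeZero (t * q ^ ℓ) := ⟨by have := Nat.mul_pos (show 0 < t by omega) (show 0 < q ^ ℓ by omega); omega⟩
  -- the setoid of shift-equivalence
  set sd : Setoid (GoodFun q ℓ t) :=
    ⟨fun f g => ∃ a : ZMod (t * q ^ ℓ), ∀ j, f.1 (j + a) = g.1 j,
      ⟨fun f => ⟨0, fun j => by rw [add_zero]⟩,
       fun {f g} h => by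
        obtain ⟨a, ha⟩ := h
        refine ⟨-a, fun j => ?_⟩
        have := ha (j + -a)
        rw [add_assoc, neg_add_cancel, add_zero] at this
        exact this.symm,
       fun {f g h} h1 h2 => by
        obtain ⟨a, ha⟩ := h1
        obtain ⟨b, hb⟩ := h2
        refine ⟨b + a, fun j => ?_⟩
        rw [← hb j, ← ha (j + b), add_assoc]⟩⟩ with hsd
  haveI : Fintype (GoodFun q ℓ t) := Fintype.ofFinite _
  haveI : Fintype (Quotient sd) := Fintype.ofFinite _
  set n₀ := Fintype.card (Quotient sd) with hn₀
  set Wmap : Quotient sd × ZMod (t * q ^ ℓ) → (Fin (t * ℓ) → Fin q) :=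
    fun x => fun s => D ((x.1.out).1 (x.2 + (s : ℕ))) with hWmap
  have hWinj : Function.Injective Wmap := by
    rintro ⟨x, a⟩ ⟨x', a'⟩ h
    simp only [hWmap] at h
    have hw := goodFun_decode hq hℓ ht D hD x.out x'.out a a' h
    have hrel : x.out ≈ x'.out := by
      refine ⟨a - a', fun j => ?_⟩
      have h1 := hw (j - a')
      rw [show a + (j - a') = j + (a - a') by ring, show a' + (j - a') = j by ring] at h1
      exact h1
    have hxx : x = x' := Quotient.out_equiv_out.mp hrel
    subst hxx
    have hshift : ∀ j, x.out.1 (j + (a - a')) = x.out.1 j := by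
      intro j
      have h1 := hw (j - a')
      rw [show a + (j - a') = j + (a - a') by ring, show a' + (j - a') = j by ring] at h1
      exact h1
    have := goodFun_free hq hℓ ht hfac x.out (a - a') hshift
    have haa : a = a' := by
      have := sub_eq_zero.mp this
      exact this
    rw [haa]
  have hDbij : Function.Bijective (fun j : ZMod (q ^ ℓ) => fun s : Fin ℓ => D (j + (s : ℕ))) := by
    rw [Fintype.bijective_iff_injective_and_card]
    exact ⟨hD, by simp [ZMod.card, Fintype.card_fun]⟩
  have hWsurj : Function.Surjective Wmap := by
    intro w
    choose u hu using fun r : Fin t =>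
      hDbij.2 (fun m : Fin ℓ => w ⟨(r : ℕ) + (m : ℕ) * t, idx_lt _ _ r.isLt m.isLt⟩)
    set u' : ℕ → ZMod (q ^ ℓ) := fun r => if h : r < t then u ⟨r, h⟩ else 0 with hu'
    set G : ℕ → ZMod (q ^ ℓ) :=
      fun v => u' (v % t) + ((v / t : ℕ) : ZMod (q ^ ℓ)) with hG
    have hGgood : ∀ j : ZMod (t * q ^ ℓ),
        G ((j + ((t : ℕ) : ZMod (t * q ^ ℓ))).val) = G j.val + 1 := by
      intro j
      set v := j.val with hv
      have hvlt : v < t * q ^ ℓ := ZMod.val_lt j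
      have htlt : t < t * q ^ ℓ := by nlinarith
      have hval : (j + ((t : ℕ) : ZMod (t * q ^ ℓ))).val = (v + t) % (t * q ^ ℓ) := by
        rw [ZMod.val_add, ZMod.val_natCast, Nat.mod_eq_of_lt htlt]
      rw [hval]
      by_cases hcase : v + t < t * q ^ ℓ
      · rw [Nat.mod_eq_of_lt hcase, hG]
        simp only
        rw [Nat.add_mod_right, Nat.add_div_right v (by omega)]
        push_cast
        ring
      · have hge : t * q ^ ℓ ≤ v + t := by omega
        have hmod : (v + t) % (t * q ^ ℓ) = v + t - t * q ^ ℓ := by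
          rw [Nat.mod_eq_sub_mod hge]
          exact Nat.mod_eq_of_lt (by omega)
        rw [hmod]
        set ww := v + t - t * q ^ ℓ with hww
        have hwweq : ww + t * q ^ ℓ = v + t := by omega
        have hmod2 : ww % t = v % t := by
          have h1 : (ww + t * q ^ ℓ) % t = ww % t := Nat.add_mul_mod_self_left ww t (q ^ ℓ)
          have h2 : (v + t) % t = v % t := Nat.add_mod_right v t
          rw [← h1, hwweq, h2]
        have hdiv2 : ww / t + q ^ ℓ = v / t + 1 := by
          have h1 : (ww + t * q ^ ℓ) / t = ww / t + q ^ ℓ :=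
            Nat.add_mul_div_left ww (q ^ ℓ) (by omega)
          have h2 : (v + t) / t = v / t + 1 := Nat.add_div_right v (by omega)
          rw [← h1, hwweq, h2]
        rw [hG]
        simp only
        rw [hmod2]
        have hcast : ((ww / t : ℕ) : ZMod (q ^ ℓ)) = ((v / t : ℕ) : ZMod (q ^ ℓ)) + 1 := by
          have h9 := congrArg (fun x : ℕ => (x : ZMod (q ^ ℓ))) hdiv2
          simp only [Nat.cast_add, Nat.cast_one, ZMod.natCast_self, add_zero] at h9
          exact h9
        rw [hcast]
        ring
    set fX : GoodFun q ℓ t := ⟨fun x => G x.val, fun j => hGgood j⟩ with hfX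
    obtain ⟨aa, haa⟩ : (⟦fX⟧ : Quotient sd).out ≈ fX := Quotient.mk_out fX
    refine ⟨(⟦fX⟧, aa), ?_⟩
    funext s
    show D ((⟦fX⟧ : Quotient sd).out.1 (aa + (s : ℕ))) = w s
    rw [show aa + ((s : ℕ) : ZMod (t * q ^ ℓ)) = ((s : ℕ) : ZMod (t * q ^ ℓ)) + aa from
      add_comm _ _, haa ((s : ℕ) : ZMod (t * q ^ ℓ))]
    have hslt : (s : ℕ) < t * q ^ ℓ := by
      have h1 : (s : ℕ) < t * ℓ := s.isLt
      have h2 : ℓ < q ^ ℓ := by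
        calc ℓ < 2 ^ ℓ := Nat.lt_two_pow_self
        _ ≤ q ^ ℓ := Nat.pow_le_pow_left (by omega) ℓ
      have h3 : t * ℓ ≤ t * q ^ ℓ := Nat.mul_le_mul_left t (by omega)
      omega
    have hsval : (((s : ℕ) : ZMod (t * q ^ ℓ))).val = (s : ℕ) := ZMod.val_cast_of_lt hslt
    show D (G (((s : ℕ) : ZMod (t * q ^ ℓ))).val) = w s
    rw [hsval]
    have hmlt : (s : ℕ) / t < ℓ := Nat.div_lt_of_lt_mul s.isLt
    have hru : u' ((s : ℕ) % t) = u ⟨(s : ℕ) % t, Nat.mod_lt _ (by omega)⟩ := dif_pos _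
    show D (u' ((s : ℕ) % t) + (((s : ℕ) / t : ℕ) : ZMod (q ^ ℓ))) = w s
    rw [hru]
    have h7 := congrFun (hu ⟨(s : ℕ) % t, Nat.mod_lt _ (by omega)⟩) ⟨(s : ℕ) / t, hmlt⟩
    simp only at h7
    have h8 : w (⟨(s : ℕ) % t + (s : ℕ) / t * t,
        idx_lt _ _ (Nat.mod_lt _ (by omega)) hmlt⟩ : Fin (t * ℓ)) = w s :=
      congrArg w (Fin.ext (Nat.mod_add_div' (s : ℕ) t))
    exact h7.trans h8
  have hcards : n₀ * (t * q ^ ℓ) = q ^ (t * ℓ) := by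
    have hbij : Function.Bijective Wmap := ⟨hWinj, hWsurj⟩
    have h1 := Fintype.card_of_bijective hbij
    rw [Fintype.card_prod, ZMod.card, Fintype.card_fun, Fintype.card_fin, Fintype.card_fin] at h1
    rw [← hn₀] at h1
    exact h1
  refine ⟨n₀, hcards, ?_⟩
  set ee := (Fintype.equivFin (Quotient sd)).symm with hee
  refine ⟨fun i j => D ((ee i).out.1 j), ?_⟩
  rintro ⟨i, a⟩ ⟨i', a'⟩ h
  simp only at h
  have := hWinj (a₁ := (ee i, a)) (a₂ := (ee i', a')) h
  rw [Prod.mk.injEq] at this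
  rw [Prod.mk.injEq]
  exact ⟨ee.injective this.1, this.2⟩


theorem stmt14 (q ℓ t : ℕ) (hq : 2 ≤ q) (hℓ : 1 ≤ ℓ) (ht : 1 ≤ t)
    (hfac : ∀ p : ℕ, p.Prime → p ∣ t → p ∣ q) :
    t * eBugNumber q (t * q ^ ℓ) (t * ℓ) = q ^ ((t - 1) * ℓ) := by
  classical
  obtain ⟨n₀, hcards, c₀, hc₀⟩ := ebug_construction hq hℓ ht hfac
  set S := {n : ℕ | ∃ c : Fin n → ZMod (t * q ^ ℓ) → Fin q,
    ebugValid q (t * q ^ ℓ) (t * ℓ) n c} with hS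
  have hmem : n₀ ∈ S := ⟨c₀, hc₀⟩
  have hQpos : 0 < q ^ ℓ := by positivity
  have hkpos : 0 < t * q ^ ℓ := Nat.mul_pos (by omega) hQpos
  haveI : NeZero (t * q ^ ℓ) := ⟨by omega⟩
  have hub : ∀ n ∈ S, n ≤ n₀ := by
    rintro n ⟨c, hc⟩
    have hcard := Fintype.card_le_of_injective _ hc
    simp only [Fintype.card_prod, ZMod.card, Fintype.card_fun, Fintype.card_fin] at hcard
    rw [← hcards] at hcard
    exact Nat.le_of_mul_le_mul_right hcard hkpos
  have hsup : eBugNumber q (t * q ^ ℓ) (t * ℓ) = n₀ := by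
    have hdef : eBugNumber q (t * q ^ ℓ) (t * ℓ) = sSup S := rfl
    rw [hdef]
    apply le_antisymm
    · exact csSup_le ⟨n₀, hmem⟩ hub
    · exact le_csSup ⟨n₀, hub⟩ hmem
  rw [hsup]
  have hexp : (t - 1) * ℓ + ℓ = t * ℓ := by
    have h1 : t - 1 + 1 = t := by omega
    calc (t - 1) * ℓ + ℓ = ((t - 1) + 1) * ℓ := by rw [add_mul, one_mul]
    _ = t * ℓ := by rw [h1]
  have h2 : (t * n₀) * q ^ ℓ = q ^ ((t - 1) * ℓ) * q ^ ℓ := by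
    rw [← pow_add, hexp, ← hcards]
    ring
  exact Nat.eq_of_mul_eq_mul_right hQpos h2
end

section
/- Let ℓ be a prime and q ≥ 1. Then there exists an ℓ-valid (q,ℓ)-colouring of (q^ℓ − q)/ℓ eBugs, so E(q,ℓ,ℓ) ≥ (q^ℓ − q)/ℓ. Moreover, if q < ℓ then this is best possible: E(q,ℓ,ℓ) = (q^ℓ − q)/ℓ. -/
namespace EBug

variable (q ℓ : ℕ)

abbrev G (ℓ : ℕ) := Multiplicative (ZMod ℓ)

abbrev X (q ℓ : ℕ) := {w : ZMod ℓ → Fin q // ∃ x, w x ≠ w 0}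

instance : SMul (G ℓ) (ZMod ℓ → Fin q) := ⟨fun g w => fun x => w (x + g.toAdd)⟩

lemma smul_apply (g : G ℓ) (w : ZMod ℓ → Fin q) (x : ZMod ℓ) :
    (g • w) x = w (x + g.toAdd) := rfl

instance : MulAction (G ℓ) (ZMod ℓ → Fin q) where
  one_smul w := funext fun x => by simp [smul_apply]
  mul_smul g g' w := funext fun x => by simp [smul_apply, add_assoc]

lemma nonconst_smul (g : G ℓ) (w : ZMod ℓ → Fin q) (hw : ∃ x, w x ≠ w 0) :
    ∃ x, (g • w) x ≠ (g • w) 0 := by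
  by_contra hc
  push_neg at hc
  set a := Multiplicative.toAdd g with ha
  have h1 : ∀ x, w (x + a) = w a := by
    intro x
    have := hc x
    simpa [smul_apply] using this
  have h2 : ∀ y, w y = w a := by
    intro y
    have := h1 (y - a)
    simpa using this
  obtain ⟨x0, hx0⟩ := hw
  exact hx0 ((h2 x0).trans (h2 0).symm)

instance : SMul (G ℓ) (X q ℓ) :=
  ⟨fun g w => ⟨g • w.1, nonconst_smul q ℓ g w.1 w.2⟩⟩

lemma X_smul_coe (g : G ℓ) (w : X q ℓ) : (g • w).1 = g • w.1 := rfl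

instance : MulAction (G ℓ) (X q ℓ) where
  one_smul w := Subtype.ext (one_smul (G ℓ) w.1)
  mul_smul g g' w := Subtype.ext (mul_smul g g' w.1)

lemma stab_eq_bot [Fact ℓ.Prime] (x : X q ℓ) :
    MulAction.stabilizer (G ℓ) x = ⊥ := by
  haveI : NeZero ℓ := ⟨(Fact.out : ℓ.Prime).ne_zero⟩
  rw [Subgroup.eq_bot_iff_forall]
  intro g hg
  rw [MulAction.mem_stabilizer_iff] at hg
  by_contra hg1
  set a := Multiplicative.toAdd g with ha
  have ha0 : a ≠ 0 := by
    intro h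
    exact hg1 (by simpa [ha] using h)
  have hw : ∀ y, x.1 (y + a) = x.1 y := by
    intro y
    have := congrFun (congrArg Subtype.val hg) y
    simpa [X_smul_coe, smul_apply] using this
  have key : ∀ n : ℕ, x.1 ((n : ZMod ℓ) * a) = x.1 0 := by
    intro n
    induction n with
    | zero => simp
    | succ n ih =>
      push_cast
      rw [add_mul, one_mul, hw, ih]
  have hconst : ∀ y, x.1 y = x.1 0 := by
    intro y
    have hy : (((y * a⁻¹).val : ℕ) : ZMod ℓ) * a = y := by
      rw [ZMod.natCast_val, ZMod.cast_id]
      exact inv_mul_cancel_right₀ ha0 y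
    rw [← hy]
    exact key _
  obtain ⟨x0, hx0⟩ := x.2
  exact hx0 (hconst x0)

lemma card_G [NeZero ℓ] : Nat.card (G ℓ) = ℓ := by
  simp [Nat.card_eq_fintype_card, ZMod.card]

/-- cardinality of the set of nonconstant words -/
lemma card_X [NeZero ℓ] : Nat.card (X q ℓ) = q ^ ℓ - q := by
  classical
  have e : X q ℓ ≃ {w : ZMod ℓ → Fin q // ¬ ∀ x, w x = w 0} :=
    Equiv.subtypeEquivRight (fun w => by push_neg; rfl)
  have ec : {w : ZMod ℓ → Fin q // ∀ x, w x = w 0} ≃ Fin q :=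
    { toFun := fun w => w.1 0
      invFun := fun a => ⟨fun _ => a, fun _ => rfl⟩
      left_inv := fun w => Subtype.ext (funext fun x => (w.2 x).symm)
      right_inv := fun a => rfl }
  rw [Nat.card_congr e, Nat.card_eq_fintype_card, Fintype.card_subtype_compl]
  have h1 : Fintype.card (ZMod ℓ → Fin q) = q ^ ℓ := by
    simp [ZMod.card]
  have h2 : Fintype.card {w : ZMod ℓ → Fin q // ∀ x, w x = w 0} = q :=
    Fintype.card_congr ec |>.trans (by simp)
  rw [h1, h2]

instance [NeZero ℓ] : Finite (X q ℓ) :=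
  inferInstanceAs (Finite {w : ZMod ℓ → Fin q // ∃ x, w x ≠ w 0})

abbrev Om (q ℓ : ℕ) := MulAction.orbitRel.Quotient (G ℓ) (X q ℓ)

lemma card_X_eq [Fact ℓ.Prime] : Nat.card (X q ℓ) = Nat.card (Om q ℓ) * ℓ := by
  haveI : NeZero ℓ := ⟨(Fact.out : ℓ.Prime).ne_zero⟩
  have e : X q ℓ ≃ (Om q ℓ) × (G ℓ) :=
    (MulAction.selfEquivSigmaOrbitsQuotientStabilizer (G ℓ) (X q ℓ)).trans
      ((Equiv.sigmaCongrRight fun ω =>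
        ((QuotientGroup.quotientMulEquivOfEq (stab_eq_bot q ℓ _)).trans
          QuotientGroup.quotientBot).toEquiv).trans
        (Equiv.sigmaEquivProd _ _))
  rw [Nat.card_congr e, Nat.card_prod, card_G]

lemma card_Om [Fact ℓ.Prime] : Nat.card (Om q ℓ) = (q ^ ℓ - q) / ℓ := by
  haveI : NeZero ℓ := ⟨(Fact.out : ℓ.Prime).ne_zero⟩
  have h := (card_X q ℓ).symm.trans (card_X_eq q ℓ)
  rw [h, Nat.mul_div_cancel _ (Fact.out : ℓ.Prime).pos]

lemma cast_surj [NeZero ℓ] (t : ZMod ℓ) : ∃ s : Fin ℓ, ((s : ℕ) : ZMod ℓ) = t :=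
  ⟨⟨t.val, ZMod.val_lt t⟩, ZMod.natCast_rightInverse t⟩

/-- the lower-bound colouring exists -/
lemma lower [Fact ℓ.Prime] :
    ∃ c : Fin ((q ^ ℓ - q) / ℓ) → ZMod ℓ → Fin q, ebugValid q ℓ ℓ ((q ^ ℓ - q) / ℓ) c := by
  haveI : NeZero ℓ := ⟨(Fact.out : ℓ.Prime).ne_zero⟩
  classical
  letI : Fintype (Om q ℓ) := Fintype.ofFinite _
  have hcard : Fintype.card (Om q ℓ) = (q ^ ℓ - q) / ℓ := by
    rw [← Nat.card_eq_fintype_card]; exact card_Om q ℓ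
  let e : Fin ((q ^ ℓ - q) / ℓ) ≃ Om q ℓ := (Fintype.equivFinOfCardEq hcard).symm
  refine ⟨fun i x => ((e i).out).1 x, ?_⟩
  rintro ⟨i, j⟩ ⟨i', j'⟩ h
  simp only at h
  -- turn window equality into full-word equality
  have h' : ∀ t : ZMod ℓ, ((e i).out).1 (j + t) = ((e i').out).1 (j' + t) := by
    intro t
    obtain ⟨s, hs⟩ := cast_surj ℓ t
    have := congrFun h s
    simpa [hs] using this
  set g : G ℓ := Multiplicative.ofAdd (j - j') with hg
  have hsmul : g • (e i).out = (e i').out := by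
    apply Subtype.ext
    funext x
    have := h' (x - j')
    rw [X_smul_coe, smul_apply]
    have e1 : x + Multiplicative.toAdd g = j + (x - j') := by
      simp [hg]; ring
    have e2 : j' + (x - j') = x := by ring
    rw [e1, this, e2]
  have hii : i = i' := by
    have : e i = e i' := by
      rw [← Quotient.out_eq' (e i), ← Quotient.out_eq' (e i'), Quotient.eq'']
      exact ⟨g⁻¹, by simp [← hsmul]⟩
    exact e.injective this
  subst hii
  have hgone : g = 1 := by
    have : g ∈ MulAction.stabilizer (G ℓ) ((e i).out) := by
      rw [MulAction.mem_stabilizer_iff, hsmul]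
    rwa [stab_eq_bot, Subgroup.mem_bot] at this
  have hjj : j = j' := by
    have : j - j' = 0 := by
      have := congrArg Multiplicative.toAdd hgone
      simpa [hg] using this
    linear_combination (norm := ring_nf) this
  simp [hjj]

/-- upper bound: any valid colouring has at most `card Om` bugs -/
lemma upper [Fact ℓ.Prime] (n : ℕ) (c : Fin n → ZMod ℓ → Fin q)
    (hc : ebugValid q ℓ ℓ n c) : n ≤ (q ^ ℓ - q) / ℓ := by
  haveI : NeZero ℓ := ⟨(Fact.out : ℓ.Prime).ne_zero⟩
  have hnc : ∀ i, ∃ x, c i x ≠ c i 0 := by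
    intro i
    by_contra hcon
    push_neg at hcon
    have : ((i, (0 : ZMod ℓ)) : Fin n × ZMod ℓ) = (i, 1) := by
      apply hc
      funext s
      simp [hcon]
    have h01 : (0 : ZMod ℓ) = 1 := congrArg Prod.snd this
    haveI : Fact (1 < ℓ) := ⟨(Fact.out : ℓ.Prime).one_lt⟩
    exact zero_ne_one h01
  let f : Fin n → Om q ℓ := fun i => Quotient.mk'' ⟨c i, hnc i⟩
  have hf : Function.Injective f := by
    intro i i' hfe
    obtain ⟨g, hg⟩ := Quotient.eq''.mp hfe
    set a := Multiplicative.toAdd g with ha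
    have hcc : ∀ x, c i' (x + a) = c i x := by
      intro x
      exact congrFun (congrArg Subtype.val hg) x
    have : ((i, (0 : ZMod ℓ)) : Fin n × ZMod ℓ) = (i', a) := by
      apply hc
      funext s
      simp only []
      rw [zero_add, ← hcc, add_comm]
    exact congrArg Prod.fst this
  calc n = Nat.card (Fin n) := by simp
    _ ≤ Nat.card (Om q ℓ) := Nat.card_le_card_of_injective f hf
    _ = (q ^ ℓ - q) / ℓ := card_Om q ℓ

end EBug

theorem stmt16 (q ℓ : ℕ) (hq : 1 ≤ q) (hℓ : ℓ.Prime) :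
    (∃ c : Fin ((q ^ ℓ - q) / ℓ) → ZMod ℓ → Fin q, ebugValid q ℓ ℓ ((q ^ ℓ - q) / ℓ) c) ∧
    (q ^ ℓ - q) / ℓ ≤ eBugNumber q ℓ ℓ ∧
    (q < ℓ → eBugNumber q ℓ ℓ = (q ^ ℓ - q) / ℓ) := by
  haveI : Fact ℓ.Prime := ⟨hℓ⟩
  have hlow := EBug.lower q ℓ
  have hmem : (q ^ ℓ - q) / ℓ ∈ {n : ℕ | ∃ c : Fin n → ZMod ℓ → Fin q, ebugValid q ℓ ℓ n c} := hlow
  have hbdd : ∀ n ∈ {n : ℕ | ∃ c : Fin n → ZMod ℓ → Fin q, ebugValid q ℓ ℓ n c},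
      n ≤ (q ^ ℓ - q) / ℓ := by
    rintro n ⟨c, hc⟩
    exact EBug.upper q ℓ n c hc
  have hle : (q ^ ℓ - q) / ℓ ≤ eBugNumber q ℓ ℓ :=
    le_csSup ⟨(q ^ ℓ - q) / ℓ, hbdd⟩ hmem
  refine ⟨hlow, hle, fun _ => le_antisymm (csSup_le ⟨_, hmem⟩ hbdd) hle⟩
end

section
/- (Necklace joining.) Let ℓ be a prime, q ≥ 1 and t ≥ 1. Suppose the set of aperiodic necklaces of length ℓ over q colours can be partitioned into parts of size t, each of which induces a connected subgraph of the necklace adjacency graph N'(q,ℓ). Then there exists an ℓ-valid (q, t·ℓ)-colouring of (q^ℓ − q)/(t·ℓ) eBugs, so E(q, t·ℓ, ℓ) ≥ (q^ℓ − q)/(tℓ); and if q < t·ℓ then E(q, t·ℓ, ℓ) = (q^ℓ − q)/(tℓ). -/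
/-- Left rotation of a word of length `ℓ` over `q` colours. -/
def rot (q ℓ : ℕ) (w : ZMod ℓ → Fin q) : ZMod ℓ → Fin q := fun j => w (j + 1)

/-- Two words are related if some rotation of the first equals the second. -/
def rotRel (q ℓ : ℕ) (w w' : ZMod ℓ → Fin q) : Prop :=
  ∃ i : ℕ, (rot q ℓ)^[i] w = w'

/-- A word is aperiodic if `ρ^[i] w = w` only when `i ≡ 0 (mod ℓ)`. -/
def Aperiodic (q ℓ : ℕ) (w : ZMod ℓ → Fin q) : Prop :=
  ∀ i : ℕ, (rot q ℓ)^[i] w = w → ℓ ∣ i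

/-- A necklace is a rotation-orbit of words. -/
def Necklace (q ℓ : ℕ) : Type := Quot (rotRel q ℓ)

/-- An aperiodic necklace is the orbit of an aperiodic word. -/
def ApNecklace (q ℓ : ℕ) : Type :=
  {x : Necklace q ℓ // ∃ w : ZMod ℓ → Fin q, Aperiodic q ℓ w ∧ Quot.mk (rotRel q ℓ) w = x}

/-- The necklace adjacency graph `N'(q,ℓ)`: two distinct aperiodic necklaces are adjacent
iff they have representative words agreeing in positions `0, …, ℓ-2`
(i.e. they share an `(ℓ-1)`-factor). -/
def necklaceGraph (q ℓ : ℕ) : SimpleGraph (ApNecklace q ℓ) :=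
  SimpleGraph.fromRel (fun x y => ∃ w w' : ZMod ℓ → Fin q,
    Quot.mk (rotRel q ℓ) w = x.1 ∧ Quot.mk (rotRel q ℓ) w' = y.1 ∧
    ∀ s : ℕ, s ≤ ℓ - 2 → w (s : ZMod ℓ) = w' (s : ZMod ℓ))

namespace NJ
variable {q ℓ : ℕ}

lemma rot_iterate (w : ZMod ℓ → Fin q) (n : ℕ) (z : ZMod ℓ) :
    (rot q ℓ)^[n] w z = w (z + n) := by
  induction n generalizing w z with
  | zero => simp
  | succ n ih =>
    rw [Function.iterate_succ_apply, ih]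
    show w (z + n + 1) = _
    push_cast
    ring_nf

lemma rot_iterate_ell (w : ZMod ℓ → Fin q) : (rot q ℓ)^[ℓ] w = w := by
  funext z
  rw [rot_iterate]
  simp [ZMod.natCast_self]

lemma rot_iterate_mod (w : ZMod ℓ → Fin q) (n : ℕ) :
    (rot q ℓ)^[n] w = (rot q ℓ)^[n % ℓ] w := by
  funext z
  rw [rot_iterate, rot_iterate, ← ZMod.natCast_mod]

lemma rotRel_equivalence (hℓ : 0 < ℓ) : Equivalence (rotRel q ℓ) := by
  constructor
  · exact fun w => ⟨0, rfl⟩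
  · rintro w w' ⟨i, rfl⟩
    refine ⟨ℓ - i % ℓ, ?_⟩
    rw [← Function.iterate_add_apply]
    rw [rot_iterate_mod]
    have : (ℓ - i % ℓ + i) % ℓ = 0 := by
      have h1 : i % ℓ < ℓ := Nat.mod_lt _ hℓ
      have : (ℓ - i % ℓ + i) % ℓ = (ℓ - i % ℓ + i % ℓ) % ℓ := by
        conv_lhs => rw [← Nat.mod_add_div i ℓ]
        simp [Nat.add_mul_mod_self_left, ← Nat.add_assoc]
      rw [this, Nat.sub_add_cancel h1.le, Nat.mod_self]
    rw [this]
    rfl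
  · rintro w w' w'' ⟨i, rfl⟩ ⟨j, rfl⟩
    exact ⟨j + i, (Function.iterate_add_apply _ _ _ _)⟩

lemma quot_mk_eq_iff (hℓ : 0 < ℓ) (w w' : ZMod ℓ → Fin q) :
    Quot.mk (rotRel q ℓ) w = Quot.mk (rotRel q ℓ) w' ↔ rotRel q ℓ w w' := by
  rw [Quot.eq, (rotRel_equivalence hℓ).eqvGen_iff]

lemma rot_injective : Function.Injective (rot q ℓ) := by
  intro a b h
  funext z
  have := congrFun h (z - 1)
  simpa [rot, sub_add_cancel] using this

lemma aperiodic_rot_iterate {w : ZMod ℓ → Fin q} (hw : Aperiodic q ℓ w) (i : ℕ) :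
    Aperiodic q ℓ ((rot q ℓ)^[i] w) := by
  intro j hj
  apply hw j
  have h1 : (rot q ℓ)^[i] ((rot q ℓ)^[j] w) = (rot q ℓ)^[i] w := by
    rw [← Function.iterate_add_apply, add_comm, Function.iterate_add_apply, hj]
  exact (rot_injective.iterate i) h1

lemma orbit_inj_aux (hℓ : 0 < ℓ) {w : ZMod ℓ → Fin q} (hw : Aperiodic q ℓ w)
    {i j : ℕ} (hi : i < ℓ) (hj : j < ℓ) (hij : i ≤ j)
    (h : (rot q ℓ)^[i] w = (rot q ℓ)^[j] w) : i = j := by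
  have h1 : (rot q ℓ)^[ℓ - j] ((rot q ℓ)^[i] w) = w := by
    rw [h, ← Function.iterate_add_apply, Nat.sub_add_cancel hj.le, rot_iterate_ell]
  rw [← Function.iterate_add_apply] at h1
  have h2 := hw _ h1
  have h3 := Nat.le_of_dvd (by omega) h2
  omega

lemma orbit_inj (hℓ : 0 < ℓ) {w : ZMod ℓ → Fin q} (hw : Aperiodic q ℓ w)
    {i j : ℕ} (hi : i < ℓ) (hj : j < ℓ) (h : (rot q ℓ)^[i] w = (rot q ℓ)^[j] w) : i = j := by
  rcases le_total i j with hij | hij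
  · exact orbit_inj_aux hℓ hw hi hj hij h
  · exact (orbit_inj_aux hℓ hw hj hi hij h.symm).symm


section
variable (q ℓ : ℕ)

def nq (w : ZMod ℓ → Fin q) : Necklace q ℓ := Quot.mk (rotRel q ℓ) w

def Fib (x : ApNecklace q ℓ) : Set (ZMod ℓ → Fin q) := {w | nq q ℓ w = x.1}

def wordsOf (U : Set (ApNecklace q ℓ)) : Set (ZMod ℓ → Fin q) :=
  {w | ∃ x ∈ U, nq q ℓ w = x.1}

end

lemma necklace_finite (hℓ : 0 < ℓ) : Finite (ApNecklace q ℓ) := by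
  haveI : NeZero ℓ := ⟨hℓ.ne'⟩
  haveI : Finite (Necklace q ℓ) := Finite.of_surjective (Quot.mk (rotRel q ℓ))
    (fun x => Quot.exists_rep x)
  exact Subtype.finite

lemma mem_Fib_iff (hℓ : 0 < ℓ) (x : ApNecklace q ℓ) {w₀ : ZMod ℓ → Fin q}
    (hw₀ : Aperiodic q ℓ w₀) (hx : Quot.mk (rotRel q ℓ) w₀ = x.1) (w : ZMod ℓ → Fin q) :
    w ∈ Fib q ℓ x ↔ ∃ i : ℕ, i < ℓ ∧ (rot q ℓ)^[i] w₀ = w := by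
  constructor
  · intro hw
    have : Quot.mk (rotRel q ℓ) w₀ = Quot.mk (rotRel q ℓ) w := by
      rw [hx]; exact hw.symm
    obtain ⟨i, hi⟩ := (quot_mk_eq_iff hℓ w₀ w).1 this
    exact ⟨i % ℓ, Nat.mod_lt _ hℓ, by rw [← rot_iterate_mod, hi]⟩
  · rintro ⟨i, -, rfl⟩
    show Quot.mk _ _ = _
    rw [← hx]
    exact ((quot_mk_eq_iff hℓ _ _).2 ⟨i, rfl⟩).symm

lemma apnecklace_rep (x : ApNecklace q ℓ) :
    ∃ w₀ : ZMod ℓ → Fin q, Aperiodic q ℓ w₀ ∧ Quot.mk (rotRel q ℓ) w₀ = x.1 := x.2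

lemma mem_Fib_aperiodic (hℓ : 0 < ℓ) {x : ApNecklace q ℓ} {w : ZMod ℓ → Fin q}
    (h : w ∈ Fib q ℓ x) : Aperiodic q ℓ w := by
  obtain ⟨w₀, hw₀, hx⟩ := apnecklace_rep x
  obtain ⟨i, -, rfl⟩ := (mem_Fib_iff hℓ x hw₀ hx w).1 h
  exact aperiodic_rot_iterate hw₀ i

lemma ncard_Fib (hℓ : 0 < ℓ) (x : ApNecklace q ℓ) : (Fib q ℓ x).ncard = ℓ := by
  obtain ⟨w₀, hw₀, hx⟩ := apnecklace_rep x
  have : Fib q ℓ x = (fun i : Fin ℓ => (rot q ℓ)^[(i : ℕ)] w₀) '' Set.univ := by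
    ext w
    rw [mem_Fib_iff hℓ x hw₀ hx w]
    constructor
    · rintro ⟨i, hi, rfl⟩; exact ⟨⟨i, hi⟩, Set.mem_univ _, rfl⟩
    · rintro ⟨i, -, rfl⟩; exact ⟨i, i.2, rfl⟩
  rw [this, Set.ncard_image_of_injective _ (fun i j hij => Fin.ext (orbit_inj hℓ hw₀ i.2 j.2 hij)),
    Set.ncard_univ, Nat.card_eq_fintype_card, Fintype.card_fin]

lemma Fib_eq_of_mem (hℓ : 0 < ℓ) {x y : ApNecklace q ℓ} {w : ZMod ℓ → Fin q}
    (hx : w ∈ Fib q ℓ x) (hy : w ∈ Fib q ℓ y) : x = y :=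
  Subtype.ext (hx.symm.trans hy)

lemma wordsOf_mono {U V : Set (ApNecklace q ℓ)} (h : U ⊆ V) :
    wordsOf q ℓ U ⊆ wordsOf q ℓ V := by
  rintro w ⟨x, hx, hw⟩; exact ⟨x, h hx, hw⟩

lemma ncard_wordsOf (hℓ : 0 < ℓ) (U : Set (ApNecklace q ℓ)) :
    (wordsOf q ℓ U).ncard = ℓ * U.ncard := by
  haveI : NeZero ℓ := ⟨hℓ.ne'⟩
  haveI := necklace_finite (q := q) hℓ
  refine Set.Finite.induction_on U (Set.toFinite U) (by simp [wordsOf]) ?_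
  intro y U hyU hUfin ih
  have hsplit : wordsOf q ℓ (insert y U) = Fib q ℓ y ∪ wordsOf q ℓ U := by
    ext w
    constructor
    · rintro ⟨x, hx, hw⟩
      rcases Set.mem_insert_iff.1 hx with rfl | hx
      · exact Or.inl hw
      · exact Or.inr ⟨x, hx, hw⟩
    · rintro (hw | ⟨x, hx, hw⟩)
      · exact ⟨y, Set.mem_insert _ _, hw⟩
      · exact ⟨x, Set.mem_insert_of_mem _ hx, hw⟩
  have hdisj : Disjoint (Fib q ℓ y) (wordsOf q ℓ U) := by
    rw [Set.disjoint_left]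
    rintro w hwy ⟨x, hx, hw⟩
    exact hyU ((Fib_eq_of_mem hℓ hwy hw) ▸ hx)
  rw [hsplit, Set.ncard_union_eq hdisj, ih, ncard_Fib hℓ,
    Set.ncard_insert_of_notMem hyU, Nat.mul_add, Nat.mul_one, Nat.add_comm]


lemma aperiodic_iff_rot_ne (hℓ : ℓ.Prime) (w : ZMod ℓ → Fin q) :
    Aperiodic q ℓ w ↔ rot q ℓ w ≠ w := by
  constructor
  · intro hw hrot
    have h1 : ℓ ∣ 1 := hw 1 (by simpa using hrot)
    have := Nat.le_of_dvd one_pos h1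
    have := hℓ.one_lt
    omega
  · intro hrot i hi
    by_contra hdvd
    have hcop : Nat.Coprime i ℓ := ((Nat.Prime.coprime_iff_not_dvd hℓ).2 hdvd).symm
    obtain ⟨m, -, hm⟩ := Nat.exists_mul_mod_eq_one_of_coprime hcop hℓ.one_lt
    have h2 : (rot q ℓ)^[i * m] w = w := by
      rw [Function.iterate_mul]
      exact Function.iterate_fixed hi m
    rw [rot_iterate_mod, hm] at h2
    exact hrot (by simpa using h2)

lemma rot_eq_iff_const (hℓ : 0 < ℓ) (w : ZMod ℓ → Fin q) :
    rot q ℓ w = w ↔ ∃ v, w = Function.const _ v := by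
  constructor
  · intro h
    refine ⟨w 0, funext fun z => ?_⟩
    have key : ∀ n : ℕ, w (n : ZMod ℓ) = w 0 := by
      intro n
      induction n with
      | zero => simp
      | succ n ih =>
        have := congrFun h (n : ZMod ℓ)
        simp only [rot] at this
        rw [← ih, ← this]
        push_cast
        ring_nf
    haveI : NeZero ℓ := ⟨hℓ.ne'⟩
    have := key (ZMod.val z)
    rwa [ZMod.natCast_zmod_val] at this
  · rintro ⟨v, rfl⟩
    funext z
    rfl

lemma ncard_aperiodic (hℓ : ℓ.Prime) :
    {w : ZMod ℓ → Fin q | Aperiodic q ℓ w}.ncard = q ^ ℓ - q := by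
  haveI : NeZero ℓ := ⟨hℓ.pos.ne'⟩
  have hset : {w : ZMod ℓ → Fin q | Aperiodic q ℓ w} =
      Set.univ \ Set.range (fun v : Fin q => Function.const (ZMod ℓ) v) := by
    ext w
    simp only [Set.mem_setOf_eq, Set.mem_diff, Set.mem_univ, true_and, Set.mem_range]
    rw [aperiodic_iff_rot_ne hℓ]
    constructor
    · rintro h ⟨v, rfl⟩
      exact h ((rot_eq_iff_const hℓ.pos _).2 ⟨v, rfl⟩)
    · intro h hrot
      obtain ⟨v, rfl⟩ := (rot_eq_iff_const hℓ.pos _).1 hrot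
      exact h ⟨v, rfl⟩
  rw [hset, Set.ncard_diff (Set.subset_univ _), Set.ncard_univ]
  have h1 : Nat.card (ZMod ℓ → Fin q) = q ^ ℓ := by
    simp [Nat.card_eq_fintype_card, Fintype.card_fun, ZMod.card]
  have h2 : (Set.range (fun v : Fin q => Function.const (ZMod ℓ) v)).ncard = q := by
    rw [← Set.image_univ, Set.ncard_image_of_injective _ (fun a b hab => congrFun hab 0),
      Set.ncard_univ, Nat.card_eq_fintype_card, Fintype.card_fin]
  rw [h1, h2]

lemma wordsOf_univ (hℓ : ℓ.Prime) :
    wordsOf q ℓ Set.univ = {w : ZMod ℓ → Fin q | Aperiodic q ℓ w} := by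
  ext w
  constructor
  · rintro ⟨x, -, hw⟩
    exact mem_Fib_aperiodic hℓ.pos hw
  · intro hw
    exact ⟨⟨Quot.mk _ w, w, hw, rfl⟩, Set.mem_univ _, rfl⟩

lemma count_necklaces (hℓ : ℓ.Prime) :
    ℓ * Nat.card (ApNecklace q ℓ) = q ^ ℓ - q := by
  have := ncard_wordsOf (q := q) hℓ.pos Set.univ
  rw [wordsOf_univ hℓ, ncard_aperiodic hℓ, Set.ncard_univ] at this
  exact this.symm


def Ovl (q ℓ K : ℕ) (g : ZMod K → ZMod ℓ → Fin q) : Prop :=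
  ∀ i : ZMod K, ∀ s : ℕ, s ≤ ℓ - 2 → g (i + 1) (s : ZMod ℓ) = g i ((s : ZMod ℓ) + 1)

lemma window_aux (hℓ2 : 2 ≤ ℓ) {K : ℕ} {g : ZMod K → ZMod ℓ → Fin q}
    (hovl : Ovl q ℓ K g) (j : ZMod K) :
    ∀ d s : ℕ, s + d ≤ ℓ - 1 → g (j + d) (s : ZMod ℓ) = g j ((s + d : ℕ) : ZMod ℓ) := by
  intro d
  induction d with
  | zero => intro s _; simp
  | succ d ih =>
    intro s hs
    have h1 : (j + (d + 1 : ℕ)) = (j + d) + 1 := by push_cast; ring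
    rw [h1, hovl (j + d) s (by omega)]
    have h2 : ((s : ZMod ℓ) + 1) = ((s + 1 : ℕ) : ZMod ℓ) := by push_cast; ring
    rw [h2, ih (s + 1) (by omega)]
    congr 1
    push_cast
    ring

lemma window_eq (hℓ2 : 2 ≤ ℓ) {K : ℕ} {g : ZMod K → ZMod ℓ → Fin q}
    (hovl : Ovl q ℓ K g) (j : ZMod K) (d : ℕ) (hd : d ≤ ℓ - 1) :
    g (j + d) 0 = g j (d : ZMod ℓ) := by
  have := window_aux hℓ2 hovl j d 0 (by omega)
  simpa using this

lemma good_base (hℓ : ℓ.Prime) {x : ApNecklace q ℓ} :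
    ∃ g : ZMod (1 * ℓ) → ZMod ℓ → Fin q, Function.Injective g ∧ Ovl q ℓ (1 * ℓ) g ∧
      ∀ i, g i ∈ wordsOf q ℓ {x} := by
  haveI : NeZero ℓ := ⟨hℓ.pos.ne'⟩
  haveI : NeZero (1 * ℓ) := ⟨by simpa using hℓ.pos.ne'⟩
  obtain ⟨w₀, hw₀, hx⟩ := apnecklace_rep x
  refine ⟨fun i => (rot q ℓ)^[i.val] w₀, ?_, ?_, ?_⟩
  · intro i j hij
    apply ZMod.val_injective
    exact orbit_inj hℓ.pos hw₀ (by simpa using i.val_lt) (by simpa using j.val_lt) hij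
  · intro i s hs
    show (rot q ℓ)^[(i + 1).val] w₀ (s : ZMod ℓ) = (rot q ℓ)^[i.val] w₀ ((s : ZMod ℓ) + 1)
    have hvlt : i.val < ℓ := by simpa using i.val_lt
    by_cases hv : i.val + 1 < ℓ
    · have h1 : (i + 1).val = i.val + 1 := by
        haveI : Fact (1 < 1 * ℓ) := ⟨by simpa using hℓ.one_lt⟩
        rw [ZMod.val_add, ZMod.val_one]
        exact Nat.mod_eq_of_lt (by omega)
      rw [h1, rot_iterate, rot_iterate]
      congr 1
      push_cast
      ring
    · have hveq : i.val = ℓ - 1 := by omega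
      have h1 : (i + 1).val = 0 := by
        haveI : Fact (1 < 1 * ℓ) := ⟨by simpa using hℓ.one_lt⟩
        rw [ZMod.val_add, ZMod.val_one, hveq]
        simp [Nat.sub_add_cancel hℓ.pos]
      rw [h1, hveq]
      simp only [Function.iterate_zero, id_eq]
      rw [rot_iterate]
      have : ((s : ZMod ℓ) + 1 + (ℓ - 1 : ℕ)) = (s : ZMod ℓ) := by
        have : ((ℓ - 1 : ℕ) : ZMod ℓ) = -1 := by
          have : ((ℓ - 1 : ℕ) : ZMod ℓ) = (ℓ : ℕ) - 1 := by
            push_cast [Nat.cast_sub hℓ.pos]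
            ring
          rw [this]
          simp
        rw [this]
        ring
      rw [this]
  · intro i
    refine ⟨x, Set.mem_singleton _, ?_⟩
    show Quot.mk _ _ = _
    rw [← hx]
    exact ((quot_mk_eq_iff hℓ.pos _ _).2 ⟨i.val, rfl⟩).symm


lemma good_step (hℓ : ℓ.Prime) {U : Set (ApNecklace q ℓ)} {m : ℕ} (hm : 1 ≤ m)
    (hcard : U.ncard = m)
    {g : ZMod (m * ℓ) → ZMod ℓ → Fin q} (hinj : Function.Injective g)
    (hovl : Ovl q ℓ (m * ℓ) g) (hmem : ∀ i, g i ∈ wordsOf q ℓ U)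
    {x y : ApNecklace q ℓ} (hxU : x ∈ U) (hyU : y ∉ U)
    {wx wy : ZMod ℓ → Fin q} (hwx : Quot.mk (rotRel q ℓ) wx = x.1)
    (hwy : Quot.mk (rotRel q ℓ) wy = y.1)
    (hagree : ∀ s : ℕ, s ≤ ℓ - 2 → wx (s : ZMod ℓ) = wy (s : ZMod ℓ)) :
    ∃ g' : ZMod ((m + 1) * ℓ) → ZMod ℓ → Fin q, Function.Injective g' ∧
      Ovl q ℓ ((m + 1) * ℓ) g' ∧ ∀ i, g' i ∈ wordsOf q ℓ (insert y U) := by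
  classical
  haveI : NeZero ℓ := ⟨hℓ.pos.ne'⟩
  have hℓ2 : 2 ≤ ℓ := hℓ.two_le
  have hml : 0 < m * ℓ := Nat.mul_pos hm hℓ.pos
  haveI : NeZero (m * ℓ) := ⟨hml.ne'⟩
  haveI : NeZero ((m + 1) * ℓ) := ⟨(Nat.mul_pos (by omega) hℓ.pos).ne'⟩
  haveI := necklace_finite (q := q) hℓ.pos
  have hwyF : wy ∈ Fib q ℓ y := hwy
  have hwyap : Aperiodic q ℓ wy := mem_Fib_aperiodic hℓ.pos hwyF
  have hrange : Set.range g = wordsOf q ℓ U := by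
    refine Set.eq_of_subset_of_ncard_le ?_ ?_
    · rintro w ⟨i, rfl⟩; exact hmem i
    · rw [ncard_wordsOf hℓ.pos, hcard, ← Set.image_univ,
        Set.ncard_image_of_injective _ hinj, Set.ncard_univ, Nat.card_zmod]
      exact (Nat.mul_comm ℓ m).le
  have hwxmem : wx ∈ Set.range g := by rw [hrange]; exact ⟨x, hxU, hwx⟩
  obtain ⟨p, hp⟩ := hwxmem
  set K := (m + 1) * ℓ with hK
  have hKeq : K = m * ℓ + ℓ := by rw [hK]; ring
  have hKℓ : ℓ < K := by
    have : 1 * ℓ < (m + 1) * ℓ := (Nat.mul_lt_mul_right hℓ.pos).2 (by omega)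
    omega
  haveI : Fact (1 < K) := ⟨by omega⟩
  set g' : ZMod K → ZMod ℓ → Fin q := fun i =>
    if i.val < ℓ then (rot q ℓ)^[i.val] wy
    else g (p + ((i.val - ℓ : ℕ) : ZMod (m * ℓ))) with hg'
  have hg'lt : ∀ i : ZMod K, i.val < ℓ → g' i = (rot q ℓ)^[i.val] wy := by
    intro i h; simp only [hg', if_pos h]
  have hg'ge : ∀ i : ZMod K, ¬ i.val < ℓ →
      g' i = g (p + ((i.val - ℓ : ℕ) : ZMod (m * ℓ))) := by
    intro i h; simp only [hg', if_neg h]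
  have hy_of : ∀ v : ℕ, (rot q ℓ)^[v] wy ∈ Fib q ℓ y := by
    intro v
    show Quot.mk _ _ = _
    rw [← hwy]
    exact ((quot_mk_eq_iff hℓ.pos _ _).2 ⟨v, rfl⟩).symm
  have hval1 : ∀ i : ZMod K, (i + 1).val = (i.val + 1) % K := by
    intro i; rw [ZMod.val_add, ZMod.val_one]
  have hvlt : ∀ i : ZMod K, i.val < K := fun i => ZMod.val_lt i
  refine ⟨g', ?_, ?_, ?_⟩
  · -- injectivity
    intro i j hij
    by_cases hi : i.val < ℓ <;> by_cases hj : j.val < ℓ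
    · rw [hg'lt i hi, hg'lt j hj] at hij
      exact ZMod.val_injective _ (orbit_inj hℓ.pos hwyap hi hj hij)
    · exfalso
      rw [hg'lt i hi, hg'ge j hj] at hij
      have h1 := hy_of i.val
      rw [hij] at h1
      obtain ⟨x', hx', hq2⟩ := hmem (p + ((j.val - ℓ : ℕ) : ZMod (m * ℓ)))
      exact hyU ((Fib_eq_of_mem hℓ.pos h1 hq2) ▸ hx')
    · exfalso
      rw [hg'ge i hi, hg'lt j hj] at hij
      have h1 := hy_of j.val
      rw [← hij] at h1
      obtain ⟨x', hx', hq2⟩ := hmem (p + ((i.val - ℓ : ℕ) : ZMod (m * ℓ)))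
      exact hyU ((Fib_eq_of_mem hℓ.pos h1 hq2) ▸ hx')
    · rw [hg'ge i hi, hg'ge j hj] at hij
      have h2 := add_left_cancel (hinj hij)
      have h3 : i.val - ℓ = j.val - ℓ := by
        have hv1 := hvlt i; have hv2 := hvlt j
        have b1 : i.val - ℓ < m * ℓ := by omega
        have b2 : j.val - ℓ < m * ℓ := by omega
        have := congrArg ZMod.val h2
        rwa [ZMod.val_cast_of_lt b1, ZMod.val_cast_of_lt b2] at this
      exact ZMod.val_injective _ (by omega)
  · -- overlap
    intro i s hs
    by_cases hi : i.val < ℓ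
    · by_cases hi1 : i.val + 1 < ℓ
      · -- case A
        have h1 : (i + 1).val = i.val + 1 := by
          rw [hval1 i]; exact Nat.mod_eq_of_lt (by omega)
        have h2 : (i + 1).val < ℓ := by omega
        rw [hg'lt _ h2, hg'lt _ hi, h1, rot_iterate, rot_iterate]
        congr 1
        push_cast
        ring
      · -- case B : i.val = ℓ - 1
        have hveq : i.val = ℓ - 1 := by omega
        have h1 : (i + 1).val = ℓ := by
          have heq : i.val + 1 = ℓ := by omega
          rw [hval1 i, heq]
          exact Nat.mod_eq_of_lt hKℓ
        have h2 : ¬ (i + 1).val < ℓ := by omega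
        rw [hg'ge _ h2, hg'lt _ hi]
        have h3 : (((i + 1).val - ℓ : ℕ) : ZMod (m * ℓ)) = 0 := by
          rw [h1]; simp
        rw [h3, add_zero, hp, rot_iterate, hveq]
        have h4 : ((s : ZMod ℓ) + 1 + ((ℓ - 1 : ℕ) : ZMod ℓ)) = (s : ZMod ℓ) := by
          have h5 : ((ℓ - 1 : ℕ) : ZMod ℓ) = -1 := by
            have h6 : ((ℓ - 1 : ℕ) : ZMod ℓ) = ((ℓ : ℕ) : ZMod ℓ) - 1 := by
              push_cast [Nat.cast_sub hℓ.pos]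
              ring
            rw [h6]; simp
          rw [h5]; ring
        rw [h4]
        exact hagree s hs
    · by_cases hi1 : i.val + 1 < K
      · -- case C
        have h1 : (i + 1).val = i.val + 1 := by
          rw [hval1 i]; exact Nat.mod_eq_of_lt (by omega)
        have h2 : ¬ (i + 1).val < ℓ := by omega
        rw [hg'ge _ h2, hg'ge _ hi]
        have h3 : ((i + 1).val - ℓ : ℕ) = (i.val - ℓ) + 1 := by omega
        have h4 : (((i + 1).val - ℓ : ℕ) : ZMod (m * ℓ)) =
            ((i.val - ℓ : ℕ) : ZMod (m * ℓ)) + 1 := by rw [h3]; push_cast; ring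
        rw [h4, ← add_assoc]
        exact hovl _ s hs
      · -- case D : i.val = K - 1
        have h0 : i.val + 1 = K := by have := hvlt i; omega
        have h1 : (i + 1).val = 0 := by rw [hval1 i, h0, Nat.mod_self]
        have h2 : (i + 1).val < ℓ := by omega
        rw [hg'lt _ h2, h1, hg'ge _ hi]
        simp only [Function.iterate_zero, id_eq]
        have h3 : i.val - ℓ = m * ℓ - 1 := by omega
        have h4 : p = (p + ((i.val - ℓ : ℕ) : ZMod (m * ℓ))) + 1 := by
          rw [h3]
          have h5 : ((m * ℓ - 1 : ℕ) : ZMod (m * ℓ)) + 1 = 0 := by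
            have h6 : ((m * ℓ - 1 : ℕ) : ZMod (m * ℓ)) = ((m * ℓ : ℕ) : ZMod (m * ℓ)) - 1 := by
              push_cast [Nat.cast_sub hml]
              ring
            rw [h6]; simp
          rw [add_assoc, h5, add_zero]
        have h6 := hovl (p + ((i.val - ℓ : ℕ) : ZMod (m * ℓ))) s hs
        rw [← h4, hp] at h6
        rw [← h6]
        exact (hagree s hs).symm
  · -- membership
    intro i
    by_cases hi : i.val < ℓ
    · rw [hg'lt i hi]
      exact ⟨y, Set.mem_insert _ _, hy_of i.val⟩
    · rw [hg'ge i hi]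
      exact wordsOf_mono (Set.subset_insert _ _) (hmem _)

lemma exists_boundary {V : Type*} {G : SimpleGraph V} {S U : Set V}
    {a b : ↥S} (p : (G.induce S).Walk a b) :
    (a : V) ∉ U → (b : V) ∈ U → ∃ y ∈ S \ U, ∃ x ∈ U, G.Adj y x := by
  induction p with
  | nil => intro ha hb; exact absurd hb ha
  | @cons u v w h p ih =>
    intro ha hb
    by_cases hv : (v : V) ∈ U
    · exact ⟨u, ⟨u.2, ha⟩, v, hv, h⟩
    · exact ih hv hb

lemma good_grow (hℓ : ℓ.Prime) {S : Set (ApNecklace q ℓ)}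
    (hconn : ((necklaceGraph q ℓ).induce S).Connected) :
    ∀ j : ℕ, ∀ U : Set (ApNecklace q ℓ), U ⊆ S → U.Nonempty → (S \ U).ncard = j →
      (∃ g : ZMod (U.ncard * ℓ) → ZMod ℓ → Fin q, Function.Injective g ∧
        Ovl q ℓ (U.ncard * ℓ) g ∧ ∀ i, g i ∈ wordsOf q ℓ U) →
      ∃ g : ZMod (S.ncard * ℓ) → ZMod ℓ → Fin q, Function.Injective g ∧
        Ovl q ℓ (S.ncard * ℓ) g ∧ ∀ i, g i ∈ wordsOf q ℓ S := by
  haveI := necklace_finite (q := q) hℓ.pos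
  intro j
  induction j with
  | zero =>
    intro U hUS hUne hcard hg
    have hempty : S \ U = ∅ := by
      have := Set.ncard_eq_zero (s := S \ U) (Set.toFinite _)
      exact this.1 hcard
    have hUeq : U = S := Set.Subset.antisymm hUS (Set.diff_eq_empty.1 hempty)
    rwa [hUeq] at hg
  | succ j ih =>
    intro U hUS hUne hcard hg
    have hne : (S \ U).Nonempty := by
      rw [Set.nonempty_iff_ne_empty]
      intro h
      rw [h] at hcard
      simp at hcard
    obtain ⟨v0, hv0⟩ := hne
    obtain ⟨u0, hu0⟩ := hUne
    obtain ⟨pw⟩ := hconn.preconnected ⟨v0, hv0.1⟩ ⟨u0, hUS hu0⟩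
    obtain ⟨y, hyd, x, hxU, hadj⟩ := exists_boundary pw hv0.2 hu0
    have hyS : y ∈ S := hyd.1
    have hyU : y ∉ U := hyd.2
    unfold necklaceGraph at hadj
    rw [SimpleGraph.fromRel_adj] at hadj
    obtain ⟨-, hrel⟩ := hadj
    have hkey : ∃ wx wy : ZMod ℓ → Fin q, Quot.mk (rotRel q ℓ) wx = x.1 ∧
        Quot.mk (rotRel q ℓ) wy = y.1 ∧
        ∀ s : ℕ, s ≤ ℓ - 2 → wx (s : ZMod ℓ) = wy (s : ZMod ℓ) := by
      rcases hrel with ⟨w1, w2, h1, h2, h3⟩ | ⟨w1, w2, h1, h2, h3⟩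
      · exact ⟨w2, w1, h2, h1, fun s hs => (h3 s hs).symm⟩
      · exact ⟨w1, w2, h1, h2, h3⟩
    obtain ⟨wx, wy, hwx, hwy, hagree⟩ := hkey
    obtain ⟨g, hinj, hovl, hmem⟩ := hg
    have hm1 : 1 ≤ U.ncard := by
      have := Set.ncard_pos (s := U) (Set.toFinite _)
      exact this.2 ⟨u0, hu0⟩
    obtain ⟨g', hinj', hovl', hmem'⟩ :=
      good_step hℓ hm1 rfl hinj hovl hmem hxU hyU hwx hwy hagree
    have hcard' : (insert y U).ncard = U.ncard + 1 := Set.ncard_insert_of_notMem hyU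
    have hins : insert y U ⊆ S := Set.insert_subset hyS hUS
    have hdcard : (S \ insert y U).ncard = j := by
      have hset : S \ insert y U = (S \ U) \ {y} := by
        ext z
        simp only [Set.mem_diff, Set.mem_insert_iff, Set.mem_singleton_iff]
        tauto
      rw [hset, Set.ncard_diff_singleton_of_mem hyd, hcard]
      omega
    refine ih (insert y U) hins (Set.insert_nonempty _ _) hdcard ?_
    rw [hcard']
    exact ⟨g', hinj', hovl', hmem'⟩


lemma good_main (hℓ : ℓ.Prime) {S : Set (ApNecklace q ℓ)}
    (hconn : ((necklaceGraph q ℓ).induce S).Connected) (hSne : S.Nonempty) :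
    ∃ g : ZMod (S.ncard * ℓ) → ZMod ℓ → Fin q, Function.Injective g ∧
      Ovl q ℓ (S.ncard * ℓ) g ∧ ∀ i, g i ∈ wordsOf q ℓ S := by
  obtain ⟨x0, hx0⟩ := hSne
  haveI := necklace_finite (q := q) hℓ.pos
  refine good_grow hℓ hconn (S \ {x0}).ncard {x0} (Set.singleton_subset_iff.2 hx0)
    (Set.singleton_nonempty _) rfl ?_
  rw [Set.ncard_singleton]
  exact good_base hℓ

lemma pcount {α : Type*} [Finite α] {t : ℕ} (P : Set (Set α))
    (hdisj : P.PairwiseDisjoint id) (hcard : ∀ s ∈ P, s.ncard = t) :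
    (⋃₀ P).ncard = t * P.ncard := by
  refine Set.Finite.induction_on
    (motive := fun Q _ => Q.PairwiseDisjoint id → (∀ s ∈ Q, s.ncard = t) →
      (⋃₀ Q).ncard = t * Q.ncard)
    P (Set.toFinite P) (fun _ _ => by simp) ?_ hdisj hcard
  intro s Q hsQ hQfin ih hdisj' hcard'
  have hd : Disjoint s (⋃₀ Q) := by
    rw [Set.disjoint_sUnion_right]
    intro u hu
    exact hdisj' (Set.mem_insert _ _) (Set.mem_insert_of_mem _ hu)
      (fun h => hsQ (h ▸ hu))
  rw [Set.sUnion_insert, Set.ncard_union_eq hd (Set.toFinite _) (Set.toFinite _),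
    hcard' s (Set.mem_insert _ _),
    ih (hdisj'.subset (Set.subset_insert _ _))
      (fun u hu => hcard' u (Set.mem_insert_of_mem _ hu)),
    Set.ncard_insert_of_notMem hsQ]
  ring

end NJ

/-- **Necklace joining.** If the aperiodic necklaces of length a prime `ℓ` over `q` colours
can be partitioned into parts of size `t`, each inducing a connected subgraph of the
necklace adjacency graph, then `E(q, tℓ, ℓ) ≥ (q^ℓ − q)/(tℓ)`, with equality if `q < tℓ`. -/
theorem stmt17 (q ℓ t : ℕ) (hℓ : ℓ.Prime) (hq : 1 ≤ q) (ht : 1 ≤ t)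
    (hpart : ∃ P : Set (Set (ApNecklace q ℓ)), Setoid.IsPartition P ∧
      ∀ s ∈ P, s.ncard = t ∧ ((necklaceGraph q ℓ).induce s).Connected) :
    (∃ c : Fin ((q ^ ℓ - q) / (t * ℓ)) → ZMod (t * ℓ) → Fin q,
      ebugValid q (t * ℓ) ℓ ((q ^ ℓ - q) / (t * ℓ)) c) ∧
    (q ^ ℓ - q) / (t * ℓ) ≤ eBugNumber q (t * ℓ) ℓ ∧
    (q < t * ℓ → eBugNumber q (t * ℓ) ℓ = (q ^ ℓ - q) / (t * ℓ)) := by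
  classical
  have hℓ2 : 2 ≤ ℓ := hℓ.two_le
  haveI : NeZero ℓ := ⟨hℓ.pos.ne'⟩
  have htl : 0 < t * ℓ := Nat.mul_pos ht hℓ.pos
  haveI : NeZero (t * ℓ) := ⟨htl.ne'⟩
  haveI hfinA := NJ.necklace_finite (q := q) hℓ.pos
  obtain ⟨P, hPart, hparts⟩ := hpart
  have hsum : (⋃₀ P).ncard = t * P.ncard :=
    NJ.pcount P hPart.pairwiseDisjoint (fun s hs => (hparts s hs).1)
  have huniv : ⋃₀ P = Set.univ := hPart.sUnion_eq_univ
  have hNA : Nat.card (ApNecklace q ℓ) = t * P.ncard := by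
    rw [← Set.ncard_univ, ← huniv, hsum]
  have hqq : q ^ ℓ - q = t * ℓ * P.ncard := by
    have h := NJ.count_necklaces (q := q) hℓ
    rw [hNA] at h
    rw [← h]
    ring
  have hdiv : (q ^ ℓ - q) / (t * ℓ) = P.ncard := by
    rw [hqq, Nat.mul_div_cancel_left _ htl]
  set n := P.ncard with hn
  have hG : ∀ s : ↥P, ∃ g : ZMod (t * ℓ) → ZMod ℓ → Fin q, Function.Injective g ∧
      NJ.Ovl q ℓ (t * ℓ) g ∧ ∀ i, g i ∈ NJ.wordsOf q ℓ (s : Set (ApNecklace q ℓ)) := by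
    rintro ⟨s, hs⟩
    obtain ⟨hst, hconn⟩ := hparts s hs
    have hne : s.Nonempty := (Set.ncard_pos (Set.toFinite _)).1 (by rw [hst]; omega)
    have h := NJ.good_main hℓ hconn hne
    rwa [hst] at h
  choose g hg1 hg2 hg3 using hG
  haveI : Finite ↥P := Set.Finite.to_subtype (Set.toFinite P)
  have hPcard : Nat.card ↥P = n := by rw [Nat.card_coe_set_eq]
  set e := Finite.equivFinOfCardEq hPcard with he
  set c : Fin n → ZMod (t * ℓ) → Fin q := fun i j => g (e.symm i) j 0 with hc
  have hwin : ∀ (a : ↥P) (j : ZMod (t * ℓ)) (z : ZMod ℓ),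
      g a (j + ((z.val : ℕ) : ZMod (t * ℓ))) 0 = g a j z := by
    intro a j z
    have h1 := NJ.window_eq hℓ2 (hg2 a) j z.val (by have := ZMod.val_lt z; omega)
    rw [ZMod.natCast_zmod_val] at h1
    exact h1
  have hvalid : ebugValid q (t * ℓ) ℓ n c := by
    rintro ⟨i1, j1⟩ ⟨i2, j2⟩ hpp
    simp only at hpp
    have hfun : g (e.symm i1) j1 = g (e.symm i2) j2 := by
      funext z
      have hz : z.val < ℓ := ZMod.val_lt z
      have h1 := congrFun hpp ⟨z.val, hz⟩
      simp only [hc] at h1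
      have h2 := hwin (e.symm i1) j1 z
      have h3 := hwin (e.symm i2) j2 z
      rw [← h2, ← h3]
      exact h1
    obtain ⟨xa, hxa, hqa⟩ := hg3 (e.symm i1) j1
    obtain ⟨xb, hxb, hqb⟩ := hg3 (e.symm i2) j2
    rw [hfun] at hqa
    have hxx : xa = xb := Subtype.ext (hqa.symm.trans hqb)
    have hseq : e.symm i1 = e.symm i2 := by
      apply Subtype.ext
      by_contra hne
      have hd := hPart.pairwiseDisjoint (e.symm i1).2 (e.symm i2).2 hne
      exact (Set.disjoint_left.1 hd) (hxx ▸ hxa) hxb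
    have hp1 : i1 = i2 := e.symm.injective hseq
    subst hp1
    rw [hseq] at hfun
    have hp2 : j1 = j2 := hg1 (e.symm i1) hfun
    rw [hp2]
  have hmemE : n ∈ {n' | ∃ c' : Fin n' → ZMod (t * ℓ) → Fin q,
      ebugValid q (t * ℓ) ℓ n' c'} := ⟨c, hvalid⟩
  have hub : ∀ n' ∈ {n' | ∃ c' : Fin n' → ZMod (t * ℓ) → Fin q,
      ebugValid q (t * ℓ) ℓ n' c'}, n' * (t * ℓ) ≤ q ^ ℓ := by
    rintro n' ⟨c', hc'⟩
    have h := Fintype.card_le_of_injective _ hc'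
    simpa [ZMod.card, Fintype.card_fun] using h
  have hbdd : BddAbove {n' | ∃ c' : Fin n' → ZMod (t * ℓ) → Fin q,
      ebugValid q (t * ℓ) ℓ n' c'} := by
    refine ⟨q ^ ℓ, fun n' hn' => ?_⟩
    have h1 := hub n' hn'
    have h2 : n' ≤ n' * (t * ℓ) := Nat.le_mul_of_pos_right n' htl
    omega
  refine ⟨by rw [hdiv]; exact ⟨c, hvalid⟩, by rw [hdiv]; exact le_csSup hbdd hmemE, ?_⟩
  intro hqlt
  refine le_antisymm ?_ (by rw [hdiv]; exact le_csSup hbdd hmemE)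
  rw [hdiv]
  refine csSup_le ⟨n, hmemE⟩ (fun n' hn' => ?_)
  have h1 := hub n' hn'
  have hqle : q ≤ q ^ ℓ := Nat.le_self_pow hℓ.pos.ne' q
  have h2 : q ^ ℓ = t * ℓ * n + q := by omega
  have h3 : n' * (t * ℓ) < (n + 1) * (t * ℓ) := by
    have h4 : (n + 1) * (t * ℓ) = t * ℓ * n + t * ℓ := by ring
    have h5 : t * ℓ * n + q < t * ℓ * n + t * ℓ := Nat.add_lt_add_left hqlt _
    omega
  exact Nat.lt_succ_iff.1 (Nat.lt_of_mul_lt_mul_right h3)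
end

section
/- (Identification without orientation.) Let q ≥ 1 and ℓ ≥ 1, and suppose ℓ divides k. Then the maximum n for which there exists an identification colouring of n eBugs with k LEDs in q colours equals Z(q,ℓ), the number of orbits of the cyclic rotation action on words of length ℓ: rotation ρ acts on (ZMod ℓ → Fin q) by (ρ w) j = w (j + 1), and Z(q,ℓ) is the number of orbits of the group generated by ρ. -/
/-- An identification colouring: `ℓ`-windows on distinct eBugs never coincide
(windows within a single eBug may coincide). -/
def idValid (q k ℓ n : ℕ) (c : Fin n → ZMod k → Fin q) : Prop :=
  ∀ i i' : Fin n, i ≠ i' → ∀ j j' : ZMod k,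
    (fun s : Fin ℓ => c i (j + (s : ℕ))) ≠ (fun s : Fin ℓ => c i' (j' + (s : ℕ)))

/-- `Z(q,ℓ)`: the number of orbits of cyclic rotation on words of length `ℓ`. -/
noncomputable def necklaceCount (q ℓ : ℕ) : ℕ := Nat.card (Quot (rotRel q ℓ))

namespace Stmt18Aux

open Complex Finset

/-- The basic angle `2π/ℓ`. -/
noncomputable def th (ℓ : ℕ) : ℝ := 2 * Real.pi / ℓ

/-- The basic root of unity `e^{2πi/ℓ}`. -/
noncomputable def ze (ℓ : ℕ) : ℂ := Complex.exp (th ℓ * Complex.I)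

/-- Complex weight of a word. -/
noncomputable def Wt (q ℓ : ℕ) (v : ZMod ℓ → Fin q) : ℂ :=
  ∑ s ∈ Finset.range ℓ, ((v (s : ZMod ℓ)).val : ℂ) * ze ℓ ^ s

/-- Selection predicate: the Mykkeltveit-type sector rule. -/
def SEL (q ℓ : ℕ) (v : ZMod ℓ → Fin q) : Prop :=
  ℓ = 1 ∨ ((Wt q ℓ v).im < 0 ∧ 0 ≤ (ze ℓ * Wt q ℓ v).im) ∨
    (ℓ = 2 ∧ (Wt q ℓ v).im = 0 ∧ (Wt q ℓ v).re < 0)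

/-- The window-word of `c` at position `j`. -/
def vw (q k ℓ : ℕ) (c : ZMod k → Fin q) (j : ZMod k) : ZMod ℓ → Fin q :=
  fun t => c (j + (t.val : ZMod k))

/-- Weight of a window directly in terms of the long word. -/
noncomputable def Wc (q k ℓ : ℕ) (c : ZMod k → Fin q) (j : ZMod k) : ℂ :=
  ∑ s ∈ Finset.range ℓ, ((c (j + (s : ZMod k))).val : ℂ) * ze ℓ ^ s

section basic
variable (q k ℓ : ℕ)

theorem th_pos (hℓ : 1 ≤ ℓ) : 0 < th ℓ := by
  have : (0:ℝ) < ℓ := by exact_mod_cast hℓ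
  exact div_pos (by positivity) this

theorem th_le_pi (hℓ : 2 ≤ ℓ) : th ℓ ≤ Real.pi := by
  have h2 : (2:ℝ) ≤ ℓ := by exact_mod_cast hℓ
  rw [th, div_le_iff₀ (by linarith)]
  nlinarith [Real.pi_pos]

theorem th_lt_pi (hℓ : 3 ≤ ℓ) : th ℓ < Real.pi := by
  have h2 : (3:ℝ) ≤ ℓ := by exact_mod_cast hℓ
  rw [th, div_lt_iff₀ (by linarith)]
  nlinarith [Real.pi_pos]

theorem ze_pow_self (hℓ : 1 ≤ ℓ) : ze ℓ ^ ℓ = 1 := by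
  have hℓ0 : (ℓ:ℂ) ≠ 0 := Nat.cast_ne_zero.mpr (by omega)
  rw [ze, ← Complex.exp_nat_mul]
  have h : (ℓ:ℂ) * ((th ℓ : ℝ) * Complex.I) = 2 * Real.pi * Complex.I := by
    rw [th]
    push_cast
    field_simp
  rw [h, Complex.exp_two_pi_mul_I]

theorem ze_ne_one (hℓ : 2 ≤ ℓ) : ze ℓ ≠ 1 := by
  rw [ze, Ne, Complex.exp_eq_one_iff]
  rintro ⟨n, hn⟩
  have h1 : ((th ℓ : ℝ) : ℂ) = (n : ℂ) * (2 * Real.pi) := by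
    have hn' : ((th ℓ : ℝ) : ℂ) * Complex.I = ((n : ℂ) * (2 * Real.pi)) * Complex.I := by
      rw [hn]; ring
    exact mul_right_cancel₀ Complex.I_ne_zero hn'
  have h2 : th ℓ = (n : ℝ) * (2 * Real.pi) := by exact_mod_cast h1
  have hpos := th_pos ℓ (by omega)
  have hle := th_le_pi ℓ hℓ
  have hpi := Real.pi_pos
  rcases lt_trichotomy (n:ℝ) 0 with h | h | h
  · have hn1 : (n:ℝ) ≤ -1 := by
      have : n < 0 := by exact_mod_cast h
      have : n ≤ -1 := by omega
      exact_mod_cast this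
    nlinarith
  · rw [h, zero_mul] at h2; linarith
  · have hn1 : (1:ℝ) ≤ n := by
      have : 0 < n := by exact_mod_cast h
      have : 1 ≤ n := by omega
      exact_mod_cast this
    nlinarith

theorem sum_ze_pow (hℓ : 2 ≤ ℓ) : ∑ s ∈ Finset.range ℓ, ze ℓ ^ s = 0 := by
  rw [geom_sum_eq (ze_ne_one ℓ hℓ), ze_pow_self ℓ (by omega), sub_self, zero_div]

theorem ze_abs : ‖ze ℓ‖ = 1 := by
  rw [ze]; exact Complex.norm_exp_ofReal_mul_I _

theorem ze_ne_zero : ze ℓ ≠ 0 := by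
  intro h
  have := ze_abs ℓ
  rw [h] at this; simp at this

end basic

section rotlem
variable (q ℓ : ℕ)

theorem rot_iter (m : ℕ) (w : ZMod ℓ → Fin q) :
    (rot q ℓ)^[m] w = fun t => w (t + (m : ZMod ℓ)) := by
  induction m with
  | zero => simp
  | succ n ih =>
    rw [Function.iterate_succ_apply', ih]
    funext t
    simp only [rot]
    push_cast
    ring_nf

theorem rot_card (w : ZMod ℓ → Fin q) : (rot q ℓ)^[ℓ] w = w := by
  rw [rot_iter]
  funext t
  rw [ZMod.natCast_self, add_zero]

theorem rot_mod (m : ℕ) (w : ZMod ℓ → Fin q) :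
    (rot q ℓ)^[m] w = (rot q ℓ)^[m % ℓ] w := by
  conv_lhs => rw [← Nat.mod_add_div m ℓ]
  rw [Function.iterate_add_apply, Function.iterate_mul]
  congr 1
  induction (m / ℓ) with
  | zero => simp
  | succ n ih => rw [Function.iterate_succ_apply, rot_card, ih]

theorem rotRel_equivalence (hℓ : 1 ≤ ℓ) : Equivalence (rotRel q ℓ) := by
  constructor
  · intro w; exact ⟨0, rfl⟩
  · rintro w w' ⟨m, rfl⟩
    refine ⟨ℓ - m % ℓ, ?_⟩
    rw [← Function.iterate_add_apply, rot_mod]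
    have h3 := Nat.mod_add_div m ℓ
    have h1 : m % ℓ < ℓ := Nat.mod_lt _ (by omega)
    have h2 : ℓ - m % ℓ + m = ℓ * (1 + m / ℓ) := by
      rw [Nat.mul_add, Nat.mul_one]; omega
    rw [h2, Nat.mul_mod_right]
    rfl
  · rintro u v w ⟨m, rfl⟩ ⟨n, rfl⟩
    exact ⟨n + m, (Function.iterate_add_apply _ n m u)⟩

theorem quot_mk_eq_iff (hℓ : 1 ≤ ℓ) (w w' : ZMod ℓ → Fin q) :
    Quot.mk (rotRel q ℓ) w = Quot.mk (rotRel q ℓ) w' ↔ rotRel q ℓ w w' := by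
  constructor
  · intro h
    exact ((rotRel_equivalence q ℓ hℓ).eqvGen_iff).mp (Quot.eqvGen_exact h)
  · intro h
    exact Quot.sound h

end rotlem


section wlem
variable (q k ℓ : ℕ)

theorem Wt_vw (c : ZMod k → Fin q) (j : ZMod k) :
    Wt q ℓ (vw q k ℓ c j) = Wc q k ℓ c j := by
  unfold Wt Wc vw
  refine Finset.sum_congr rfl fun s hs => ?_
  have hs' : s < ℓ := Finset.mem_range.mp hs
  rw [ZMod.val_natCast_of_lt hs']

theorem Wt_rot (hℓ : 1 ≤ ℓ) (w : ZMod ℓ → Fin q) :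
    ze ℓ * Wt q ℓ (rot q ℓ w) = Wt q ℓ w := by
  unfold Wt rot
  set f : ℕ → ℂ := fun u => ((w (u : ZMod ℓ)).val : ℂ) * ze ℓ ^ u with hf
  have h1 := Finset.sum_range_succ' f ℓ
  have h2 := Finset.sum_range_succ f ℓ
  rw [h2] at h1
  have hfl : f ℓ = f 0 := by
    simp only [hf, ZMod.natCast_self, Nat.cast_zero, pow_zero, ze_pow_self ℓ hℓ]
  have key : ∑ s ∈ Finset.range ℓ, f (s + 1) = ∑ s ∈ Finset.range ℓ, f s := by
    rw [hfl] at h1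
    linear_combination -h1
  calc ze ℓ * ∑ s ∈ Finset.range ℓ, ((w ((s : ZMod ℓ) + 1)).val : ℂ) * ze ℓ ^ s
      = ∑ s ∈ Finset.range ℓ, f (s + 1) := by
        rw [Finset.mul_sum]
        refine Finset.sum_congr rfl fun s _ => ?_
        simp only [hf]
        push_cast
        ring
    _ = ∑ s ∈ Finset.range ℓ, f s := key
    _ = Wt q ℓ w := rfl

theorem Wt_rot_iter (hℓ : 1 ≤ ℓ) (m : ℕ) (w : ZMod ℓ → Fin q) :
    ze ℓ ^ m * Wt q ℓ ((rot q ℓ)^[m] w) = Wt q ℓ w := by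
  induction m generalizing w with
  | zero => simp
  | succ n ih =>
    rw [Function.iterate_succ_apply, pow_succ]
    calc ze ℓ ^ n * ze ℓ * Wt q ℓ ((rot q ℓ)^[n] (rot q ℓ w))
        = ze ℓ * (ze ℓ ^ n * Wt q ℓ ((rot q ℓ)^[n] (rot q ℓ w))) := by ring
      _ = ze ℓ * Wt q ℓ (rot q ℓ w) := by rw [ih (rot q ℓ w)]
      _ = Wt q ℓ w := Wt_rot q ℓ hℓ w

theorem Wc_step (hℓ : 1 ≤ ℓ) (c : ZMod k → Fin q) (j : ZMod k) :
    ze ℓ * Wc q k ℓ c (j + 1) =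
      Wc q k ℓ c j + (((c (j + (ℓ : ZMod k))).val : ℂ) - ((c j).val : ℂ)) := by
  set f : ℕ → ℂ := fun u => ((c (j + (u : ZMod k))).val : ℂ) * ze ℓ ^ u with hf
  have h1 := Finset.sum_range_succ' f ℓ
  have h2 := Finset.sum_range_succ f ℓ
  rw [h2] at h1
  have hf0 : f 0 = ((c j).val : ℂ) := by
    simp only [hf, Nat.cast_zero, add_zero, pow_zero, mul_one]
  have hfl : f ℓ = ((c (j + (ℓ : ZMod k))).val : ℂ) := by
    simp only [hf, ze_pow_self ℓ hℓ, mul_one]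
  have key : ∑ s ∈ Finset.range ℓ, f (s + 1) =
      (∑ s ∈ Finset.range ℓ, f s) + f ℓ - f 0 := by linear_combination -h1
  calc ze ℓ * Wc q k ℓ c (j + 1)
      = ∑ s ∈ Finset.range ℓ, f (s + 1) := by
        unfold Wc
        rw [Finset.mul_sum]
        refine Finset.sum_congr rfl fun s _ => ?_
        simp only [hf]
        push_cast
        ring_nf
    _ = (∑ s ∈ Finset.range ℓ, f s) + f ℓ - f 0 := key
    _ = Wc q k ℓ c j + (((c (j + (ℓ : ZMod k))).val : ℂ) - ((c j).val : ℂ)) := by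
        rw [hf0, hfl]; unfold Wc; ring

theorem Wc_sum [NeZero k] (hℓ2 : 2 ≤ ℓ) (c : ZMod k → Fin q) :
    ∑ j : ZMod k, Wc q k ℓ c j = 0 := by
  unfold Wc
  rw [Finset.sum_comm]
  have inner : ∀ s : ℕ, ∑ j : ZMod k, ((c (j + (s : ZMod k))).val : ℂ) * ze ℓ ^ s
      = (∑ j : ZMod k, ((c j).val : ℂ)) * ze ℓ ^ s := by
    intro s
    rw [Finset.sum_mul]
    refine Fintype.sum_equiv (Equiv.addRight (s : ZMod k)) _ _ fun j => rfl
  calc ∑ s ∈ Finset.range ℓ, ∑ j : ZMod k, ((c (j + (s : ZMod k))).val : ℂ) * ze ℓ ^ s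
      = ∑ s ∈ Finset.range ℓ, (∑ j : ZMod k, ((c j).val : ℂ)) * ze ℓ ^ s :=
        Finset.sum_congr rfl fun s _ => inner s
    _ = (∑ j : ZMod k, ((c j).val : ℂ)) * ∑ s ∈ Finset.range ℓ, ze ℓ ^ s := by
        rw [Finset.mul_sum]
    _ = 0 := by rw [sum_ze_pow ℓ hℓ2, mul_zero]

end wlem


section mainlem
variable (q k ℓ : ℕ)

theorem periodic_of_not_sel [NeZero k] (hℓ2 : 2 ≤ ℓ) (c : ZMod k → Fin q)
    (h : ∀ j : ZMod k, ¬ SEL q ℓ (vw q k ℓ c j)) :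
    ∀ j : ZMod k, c (j + (ℓ : ZMod k)) = c j := by
  have hℓ1 : 1 ≤ ℓ := by omega
  set W : ZMod k → ℂ := Wc q k ℓ c with hWdef
  have hsel1 : ∀ j, ¬ ((W j).im < 0 ∧ 0 ≤ (ze ℓ * W j).im) := by
    intro j hcon
    exact h j (Or.inr (Or.inl (by rwa [Wt_vw q k ℓ c j])))
  have hsel2 : ∀ j, ¬ (ℓ = 2 ∧ (W j).im = 0 ∧ (W j).re < 0) := by
    intro j hcon
    exact h j (Or.inr (Or.inr (by rwa [Wt_vw q k ℓ c j])))
  have hsum : ∑ j : ZMod k, W j = 0 := Wc_sum q k ℓ hℓ2 c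
  have step : ∀ j, ze ℓ * W (j + 1) =
      W j + (((c (j + (ℓ : ZMod k))).val : ℂ) - ((c j).val : ℂ)) :=
    fun j => Wc_step q k ℓ hℓ1 c j
  have stepim : ∀ j, (ze ℓ * W (j + 1)).im = (W j).im := by
    intro j
    rw [step j]
    simp [Complex.add_im, Complex.sub_im]
  have S1 : ∀ j, 0 ≤ (W j).im → 0 ≤ (W (j + 1)).im := by
    intro j hj
    by_contra hneg
    push_neg at hneg
    exact hsel1 (j + 1) ⟨hneg, (stepim j).symm ▸ hj⟩
  have hsum_im : ∑ j : ZMod k, (W j).im = 0 := by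
    have := congrArg Complex.im hsum
    simpa [Complex.im_sum] using this
  have S2 : ∃ j : ZMod k, 0 ≤ (W j).im := by
    by_contra hall
    push_neg at hall
    have hlt : ∑ j : ZMod k, (W j).im < 0 :=
      Finset.sum_neg (fun j _ => hall j) Finset.univ_nonempty
    linarith
  obtain ⟨j₀, hj₀⟩ := S2
  have S3n : ∀ n : ℕ, 0 ≤ (W (j₀ + (n : ZMod k))).im := by
    intro n
    induction n with
    | zero => simpa using hj₀
    | succ m ih =>
      have := S1 (j₀ + (m : ZMod k)) ih
      have harg : j₀ + ((m + 1 : ℕ) : ZMod k) = (j₀ + (m : ZMod k)) + 1 := by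
        push_cast; ring
      rwa [harg]
  have S3 : ∀ j, 0 ≤ (W j).im := by
    intro j
    have := S3n ((j - j₀).val)
    have hcv : ((j - j₀).val : ZMod k) = j - j₀ := ZMod.natCast_rightInverse _
    rw [hcv, add_sub_cancel] at this
    exact this
  have S4 : ∀ j, (W j).im = 0 := by
    intro j
    exact (Finset.sum_eq_zero_iff_of_nonneg (fun i _ => S3 i)).mp hsum_im j
      (Finset.mem_univ j)
  have S5 : ∀ j, W j = 0 := by
    rcases eq_or_lt_of_le hℓ2 with h2 | h3
    · -- ℓ = 2
      have hre : ∀ j, 0 ≤ (W j).re := by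
        intro j
        by_contra hneg
        push_neg at hneg
        exact hsel2 j ⟨h2.symm, S4 j, hneg⟩
      have hsum_re : ∑ j : ZMod k, (W j).re = 0 := by
        have := congrArg Complex.re hsum
        simpa [Complex.re_sum] using this
      intro j
      have : (W j).re = 0 :=
        (Finset.sum_eq_zero_iff_of_nonneg (fun i _ => hre i)).mp hsum_re j
          (Finset.mem_univ j)
      exact Complex.ext this (S4 j)
    · -- 3 ≤ ℓ
      have h3' : 3 ≤ ℓ := h3
      have hsin : 0 < Real.sin (th ℓ) :=
        Real.sin_pos_of_pos_of_lt_pi (th_pos ℓ hℓ1) (th_lt_pi ℓ h3')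
      have hzeim : (ze ℓ).im = Real.sin (th ℓ) := by
        rw [ze]; exact Complex.exp_ofReal_mul_I_im _
      have key : ∀ j, W (j + 1) = 0 := by
        intro j
        have him : (ze ℓ * W (j + 1)).im = 0 := by rw [stepim j, S4 j]
        rw [Complex.mul_im, S4 (j + 1), mul_zero, zero_add, hzeim] at him
        have hre : (W (j + 1)).re = 0 := by
          rcases mul_eq_zero.mp him with h' | h'
          · exact absurd h' (ne_of_gt hsin)
          · exact h'
        exact Complex.ext hre (S4 (j + 1))
      intro j
      have := key (j - 1)
      rwa [sub_add_cancel] at this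
  intro j
  have hst := step j
  rw [S5 j, S5 (j + 1), mul_zero] at hst
  have hc : ((c (j + (ℓ : ZMod k))).val : ℂ) = ((c j).val : ℂ) := by
    linear_combination -hst
  have hval : (c (j + (ℓ : ZMod k))).val = (c j).val := by exact_mod_cast hc
  exact Fin.ext hval

end mainlem


section periodiclem
variable (q k ℓ : ℕ)

theorem c_mod [NeZero k] (hdvd : ℓ ∣ k) (c : ZMod k → Fin q)
    (hper : ∀ j : ZMod k, c (j + (ℓ : ZMod k)) = c j) (a : ℕ) :
    c (a : ZMod k) = c ((a % ℓ : ℕ) : ZMod k) := by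
  have hℓ0 : ℓ ≠ 0 := by
    rintro rfl
    simp only [Nat.zero_dvd] at hdvd
    exact (NeZero.ne k) hdvd
  have hperN : ∀ (x : ZMod k) (n : ℕ), c (x + ((n * ℓ : ℕ) : ZMod k)) = c x := by
    intro x n
    induction n with
    | zero => simp
    | succ m ih =>
      have harg : x + (((m + 1) * ℓ : ℕ) : ZMod k) = (x + ((m * ℓ : ℕ) : ZMod k)) + (ℓ : ZMod k) := by
        push_cast; ring
      rw [harg, hper, ih]
  have hsplit : a = a % ℓ + (a / ℓ) * ℓ := by
    have h1 := Nat.mod_add_div a ℓ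
    have h2 : ℓ * (a / ℓ) = (a / ℓ) * ℓ := Nat.mul_comm _ _
    omega
  calc c ((a : ℕ) : ZMod k) = c (((a % ℓ + (a / ℓ) * ℓ : ℕ)) : ZMod k) := by rw [← hsplit]
    _ = c (((a % ℓ : ℕ) : ZMod k) + (((a / ℓ) * ℓ : ℕ) : ZMod k)) := by push_cast; ring_nf
    _ = c ((a % ℓ : ℕ) : ZMod k) := hperN _ _

theorem vw_of_periodic [NeZero k] [NeZero ℓ] (hdvd : ℓ ∣ k) (c : ZMod k → Fin q)
    (hper : ∀ j : ZMod k, c (j + (ℓ : ZMod k)) = c j) (j : ZMod k) :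
    vw q k ℓ c j = (rot q ℓ)^[j.val % ℓ] (fun t : ZMod ℓ => c ((t.val : ZMod k))) := by
  have hℓ1 : 1 ≤ ℓ := Nat.one_le_iff_ne_zero.mpr (NeZero.ne ℓ)
  funext t
  rw [rot_iter]
  set T := t.val with hT
  set J := j.val with hJ
  -- RHS index
  have hrhs : (t + ((J % ℓ : ℕ) : ZMod ℓ)).val = (T + J % ℓ) % ℓ := by
    have ht : t = ((T : ℕ) : ZMod ℓ) := (ZMod.natCast_rightInverse t).symm
    rw [ht, ← Nat.cast_add, ZMod.val_natCast]
  have hlhs : j + ((T : ℕ) : ZMod k) = (((J + T : ℕ)) : ZMod k) := by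
    have hj : j = ((J : ℕ) : ZMod k) := (ZMod.natCast_rightInverse j).symm
    rw [hj, ← Nat.cast_add]
  show c (j + ((T:ℕ) : ZMod k)) = c (((t + ((J % ℓ : ℕ) : ZMod ℓ)).val : ℕ) : ZMod k)
  rw [hlhs, hrhs, c_mod q k ℓ hdvd c hper (J + T), c_mod q k ℓ hdvd c hper ((T + J % ℓ) % ℓ)]
  congr 2
  rw [Nat.mod_mod_of_dvd _ (dvd_refl ℓ)]
  conv_lhs => rw [Nat.add_mod]
  conv_rhs => rw [Nat.add_mod, Nat.mod_mod_of_dvd J (dvd_refl ℓ)]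
  rw [Nat.add_comm]

end periodiclem


section uniquelem
variable (q ℓ : ℕ)

/-- Membership info extracted from the selection predicate. -/
theorem sel_arg (hℓ2 : 2 ≤ ℓ) (u : ℂ)
    (hu : (u.im < 0 ∧ 0 ≤ (ze ℓ * u).im) ∨ (ℓ = 2 ∧ u.im = 0 ∧ u.re < 0)) :
    u ≠ 0 ∧ -Real.pi < u.arg ∧
      ((- th ℓ ≤ u.arg ∧ u.arg < 0) ∨ (ℓ = 2 ∧ u.arg = Real.pi)) := by
  rcases hu with ⟨him, hzim⟩ | ⟨h2, him, hre⟩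
  · have hne : u ≠ 0 := by
      intro h0; rw [h0] at him; simp at him
    have ha1 : u.arg < 0 := Complex.arg_neg_iff.mpr him
    have ha2 : -Real.pi < u.arg := Complex.neg_pi_lt_arg u
    refine ⟨hne, ha2, Or.inl ⟨?_, ha1⟩⟩
    have habs : 0 < ‖u‖ := norm_pos_iff.mpr hne
    have hθpos := th_pos ℓ (by omega)
    have hθle := th_le_pi ℓ hℓ2
    have hzu : ze ℓ * u =
        (‖u‖ : ℂ) * (Complex.cos ((th ℓ + u.arg : ℝ) : ℂ) +
          Complex.sin ((th ℓ + u.arg : ℝ) : ℂ) * Complex.I) := by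
      conv_lhs => rw [← Complex.norm_mul_exp_arg_mul_I u]
      rw [ze]
      rw [show Complex.exp (((th ℓ : ℝ) : ℂ) * Complex.I) * ((‖u‖ : ℂ) *
          Complex.exp (((u.arg : ℝ) : ℂ) * Complex.I)) =
          (‖u‖ : ℂ) * Complex.exp (((th ℓ + u.arg : ℝ) : ℂ) * Complex.I) from by
        rw [mul_left_comm, ← Complex.exp_add]
        congr 2
        push_cast
        ring]
      rw [Complex.exp_mul_I]
    have harg_eq : (ze ℓ * u).arg = th ℓ + u.arg := by
      rw [hzu]
      exact Complex.arg_mul_cos_add_sin_mul_I habs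
        ⟨by linarith, by linarith⟩
    have h0 : 0 ≤ (ze ℓ * u).arg := Complex.arg_nonneg_iff.mpr hzim
    rw [harg_eq] at h0
    linarith
  · have hne : u ≠ 0 := by
      intro h0; rw [h0] at hre; simp at hre
    exact ⟨hne, Complex.neg_pi_lt_arg u,
      Or.inr ⟨h2, Complex.arg_eq_pi_iff.mpr ⟨hre, him⟩⟩⟩

theorem sel_unique (hℓ1 : 1 ≤ ℓ) {v v' : ZMod ℓ → Fin q} (hv : SEL q ℓ v) (hv' : SEL q ℓ v')
    (m : ℕ) (hrot : (rot q ℓ)^[m] v = v') : v = v' := by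
  by_cases hone : ℓ = 1
  · subst hone
    have hrid : rot q 1 = id := by
      funext w j
      simp only [rot, id_eq]
      congr 1
      exact Subsingleton.elim _ _
    rw [hrid, Function.iterate_id, id_eq] at hrot
    exact hrot
  have hℓ2 : 2 ≤ ℓ := by omega
  have hπ := Real.pi_pos
  have hθpos := th_pos ℓ hℓ1
  have hθle := th_le_pi ℓ hℓ2
  have hθℓ : th ℓ * ℓ = 2 * Real.pi := by
    rw [th]
    have : (ℓ:ℝ) ≠ 0 := by positivity
    field_simp
  have hv2 := hv.resolve_left hone
  have hv'2 := hv'.resolve_left hone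
  set z := Wt q ℓ v with hz
  set z' := Wt q ℓ v' with hz'
  have hzrel : ze ℓ ^ m * z' = z := by
    have h := Wt_rot_iter q ℓ hℓ1 m v
    rw [hrot] at h
    exact h
  obtain ⟨hz0, hzlow, hza⟩ := sel_arg ℓ hℓ2 z hv2
  obtain ⟨hz0', hzlow', hza'⟩ := sel_arg ℓ hℓ2 z' hv'2
  set a := z.arg with ha
  set b := z'.arg with hb
  have habs_eq : ‖z‖ = ‖z'‖ := by
    have h := congrArg norm hzrel
    rw [norm_mul, norm_pow, ze_abs, one_pow, one_mul] at h
    exact h.symm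
  have hR : ((‖z'‖ : ℝ) : ℂ) ≠ 0 := by
    exact_mod_cast norm_ne_zero_iff.mpr hz0'
  have hexp : ze ℓ ^ m = Complex.exp (((a - b : ℝ) : ℂ) * Complex.I) := by
    have hdiv : ze ℓ ^ m = z / z' := by
      rw [eq_div_iff hz0']; exact hzrel
    rw [hdiv]
    conv_lhs => rw [← Complex.norm_mul_exp_arg_mul_I z, ← Complex.norm_mul_exp_arg_mul_I z']
    rw [habs_eq, mul_div_mul_left _ _ hR, ← Complex.exp_sub]
    congr 1
    push_cast
    ring
  have hpow : Complex.exp ((((a - b) * ℓ : ℝ) : ℂ) * Complex.I) = 1 := by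
    have h1 : (ze ℓ ^ m) ^ ℓ = 1 := by
      rw [← pow_mul, mul_comm, pow_mul, ze_pow_self ℓ hℓ1, one_pow]
    rw [hexp, ← Complex.exp_nat_mul] at h1
    rw [show ((((a - b) * ℓ : ℝ)) : ℂ) * Complex.I =
        (ℓ : ℂ) * (((a - b : ℝ) : ℂ) * Complex.I) from by push_cast; ring]
    exact h1
  obtain ⟨n, hn⟩ := Complex.exp_eq_one_iff.mp hpow
  have hreal : (a - b) * ℓ = n * (2 * Real.pi) := by
    have h2 : (((a - b) * ℓ : ℝ) : ℂ) * Complex.I = ((n : ℂ) * (2 * Real.pi)) * Complex.I := by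
      rw [hn]; ring
    have h3 := mul_right_cancel₀ Complex.I_ne_zero h2
    exact_mod_cast h3
  have hℓpos : (0:ℝ) < ℓ := by positivity
  have hab : a = b := by
    rcases hza with ⟨ha1, ha2⟩ | ⟨h2a, hapi⟩
    · rcases hza' with ⟨hb1, hb2⟩ | ⟨h2b, hbpi⟩
      · -- both sector
        have hd1 : (a - b) * ℓ < th ℓ * ℓ := by
          have : a - b < th ℓ := by linarith
          exact mul_lt_mul_of_pos_right this hℓpos
        have hd2 : -(th ℓ * ℓ) < (a - b) * ℓ := by
          have : -(th ℓ) < a - b := by linarith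
          nlinarith
        rw [hθℓ] at hd1 hd2
        rw [hreal] at hd1 hd2
        have hn1 : (n:ℝ) < 1 := by nlinarith
        have hn2 : (-1:ℝ) < n := by nlinarith
        have : n = 0 := by
          have h1 : n < 1 := by exact_mod_cast hn1
          have h2 : -1 < n := by exact_mod_cast hn2
          omega
        rw [this] at hreal
        norm_num at hreal
        rcases hreal with h | h
        · linarith
        · exfalso; linarith
      · -- a sector, b = π, ℓ = 2
        exfalso
        have hl2 : (ℓ:ℝ) = 2 := by rw [h2b]; norm_num
        rw [hbpi, hl2] at hreal
        have hA : a = ((n:ℝ) + 1) * Real.pi := by linear_combination hreal / 2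
        have h1 : (-1:ℝ) < (n:ℝ) + 1 := by nlinarith
        have h2 : ((n:ℝ) + 1) < 0 := by nlinarith
        have h1' : (-1:ℤ) < n + 1 := by exact_mod_cast (by push_cast; linarith : ((-1:ℤ):ℝ) < ((n+1:ℤ):ℝ))
        have h2' : (n:ℤ) + 1 < 0 := by exact_mod_cast (by push_cast; linarith : (((n+1):ℤ):ℝ) < ((0:ℤ):ℝ))
        omega
    · rcases hza' with ⟨hb1, hb2⟩ | ⟨h2b, hbpi⟩
      · -- a = π, b sector, ℓ = 2
        exfalso
        have hl2 : (ℓ:ℝ) = 2 := by rw [h2a]; norm_num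
        rw [hapi, hl2] at hreal
        have hB : b = (1 - (n:ℝ)) * Real.pi := by linear_combination -hreal / 2
        have h1 : (-1:ℝ) < 1 - (n:ℝ) := by nlinarith
        have h2 : (1 - (n:ℝ)) < 0 := by nlinarith
        have h1' : (0:ℤ) < 2 - n := by exact_mod_cast (by push_cast; linarith : ((0:ℤ):ℝ) < ((2 - n:ℤ):ℝ))
        have h2' : (1:ℤ) - n < 0 := by exact_mod_cast (by push_cast; linarith : (((1:ℤ) - n:ℤ):ℝ) < ((0:ℤ):ℝ))
        omega
      · rw [hapi, hbpi]
  have hone' : ze ℓ ^ m = 1 := by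
    rw [hexp, hab]
    simp
  have hdvdm : ℓ ∣ m := by
    rw [ze, ← Complex.exp_nat_mul] at hone'
    obtain ⟨n, hn⟩ := Complex.exp_eq_one_iff.mp hone'
    have h2 : (m : ℂ) * (((th ℓ : ℝ)) * Complex.I) = ((n : ℂ) * (2 * Real.pi)) * Complex.I := by
      rw [hn]; ring
    have h2' : ((m : ℝ) * th ℓ : ℝ) * Complex.I = ((n : ℂ) * (2 * Real.pi)) * Complex.I := by
      push_cast
      rw [← h2]; ring
    have h3 := mul_right_cancel₀ Complex.I_ne_zero h2'
    have hr : (m:ℝ) * th ℓ = n * (2 * Real.pi) := by exact_mod_cast h3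
    have hmn : (m:ℝ) * (2 * Real.pi) = (n:ℝ) * ℓ * (2 * Real.pi) := by
      calc (m:ℝ) * (2 * Real.pi) = (m:ℝ) * (th ℓ * ℓ) := by rw [hθℓ]
        _ = ((m:ℝ) * th ℓ) * ℓ := by ring
        _ = ((n:ℝ) * (2 * Real.pi)) * ℓ := by rw [hr]
        _ = (n:ℝ) * ℓ * (2 * Real.pi) := by ring
    have hmn' : (m:ℝ) = (n:ℝ) * ℓ := mul_right_cancel₀ (by positivity) hmn
    have hzint : (m:ℤ) = n * ℓ := by exact_mod_cast hmn'
    have : (ℓ:ℤ) ∣ (m:ℤ) := ⟨n, by rw [hzint]; ring⟩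
    exact_mod_cast this
  obtain ⟨t, rfl⟩ := hdvdm
  rw [rot_mod, Nat.mul_mod_right] at hrot
  exact hrot

end uniquelem


section assembly
variable (q k ℓ : ℕ)

theorem upper_bound (hk : 1 ≤ k) (hℓ : 1 ≤ ℓ) (hdvd : ℓ ∣ k)
    (n : ℕ) (c : Fin n → ZMod k → Fin q) (hvalid : idValid q k ℓ n c) :
    n ≤ necklaceCount q ℓ := by
  haveI : NeZero k := ⟨by omega⟩
  haveI : NeZero ℓ := ⟨by omega⟩
  have hdisj : ∀ i i' : Fin n, i ≠ i' → ∀ j j' : ZMod k,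
      vw q k ℓ (c i) j ≠ vw q k ℓ (c i') j' := by
    intro i i' hii j j' heq
    apply hvalid i i' hii j j'
    funext s
    have hv : ((s : ℕ) : ZMod ℓ).val = (s : ℕ) := ZMod.val_natCast_of_lt s.isLt
    calc c i (j + ((s:ℕ) : ZMod k))
        = vw q k ℓ (c i) j (((s:ℕ)) : ZMod ℓ) := by simp only [vw, hv]
      _ = vw q k ℓ (c i') j' (((s:ℕ)) : ZMod ℓ) := by rw [heq]
      _ = c i' (j' + ((s:ℕ) : ZMod k)) := by simp only [vw, hv]
  have hpick : ∀ i : Fin n, ∃ v : ZMod ℓ → Fin q,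
      (∃ j, vw q k ℓ (c i) j = v) ∧
      (SEL q ℓ v ∨ ∀ m : ℕ, ∃ j, vw q k ℓ (c i) j = (rot q ℓ)^[m] v) := by
    intro i
    by_cases hper : ∀ j, c i (j + (ℓ : ZMod k)) = c i j
    · refine ⟨fun t : ZMod ℓ => c i ((t.val : ZMod k)), ?_, Or.inr ?_⟩
      · refine ⟨0, ?_⟩
        rw [vw_of_periodic q k ℓ hdvd (c i) hper 0]
        rw [ZMod.val_zero, Nat.zero_mod]
        simp
      · intro m
        refine ⟨((m % ℓ : ℕ) : ZMod k), ?_⟩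
        rw [vw_of_periodic q k ℓ hdvd (c i) hper]
        have hlk : ℓ ≤ k := Nat.le_of_dvd (by omega) hdvd
        have hval : (((m % ℓ : ℕ) : ZMod k)).val = m % ℓ :=
          ZMod.val_natCast_of_lt (lt_of_lt_of_le (Nat.mod_lt m (by omega)) hlk)
        rw [hval, Nat.mod_mod_of_dvd _ (dvd_refl ℓ)]
        exact (rot_mod q ℓ m _).symm
    · by_cases hone : ℓ = 1
      · exact ⟨vw q k ℓ (c i) 0, ⟨0, rfl⟩, Or.inl (Or.inl hone)⟩
      · have hℓ2 : 2 ≤ ℓ := by omega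
        obtain ⟨j, hj⟩ : ∃ j, SEL q ℓ (vw q k ℓ (c i) j) := by
          by_contra hno
          push_neg at hno
          exact hper (periodic_of_not_sel q k ℓ hℓ2 (c i) hno)
        exact ⟨vw q k ℓ (c i) j, ⟨j, rfl⟩, Or.inl hj⟩
  choose v hvwin hvtype using hpick
  have hinj : Function.Injective fun i => Quot.mk (rotRel q ℓ) (v i) := by
    intro i i' heq
    by_contra hne
    simp only at heq
    rw [quot_mk_eq_iff q ℓ hℓ] at heq
    obtain ⟨m, hm⟩ := heq
    rcases hvtype i with hSi | hPi
    · rcases hvtype i' with hSi' | hPi'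
      · have hvv : v i = v i' := sel_unique q ℓ hℓ hSi hSi' m hm
        obtain ⟨j, hj⟩ := hvwin i
        obtain ⟨j', hj'⟩ := hvwin i'
        exact hdisj i i' hne j j' (by rw [hj, hj', hvv])
      · obtain ⟨m', hm'⟩ := (rotRel_equivalence q ℓ hℓ).symm ⟨m, hm⟩
        obtain ⟨j', hj'⟩ := hPi' m'
        obtain ⟨j, hj⟩ := hvwin i
        exact hdisj i i' hne j j' (by rw [hj, hj', hm'])
    · obtain ⟨j, hj⟩ := hPi m
      obtain ⟨j', hj'⟩ := hvwin i'
      exact hdisj i i' hne j j' (by rw [hj, hj', hm])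
  haveI : Finite (Quot (rotRel q ℓ)) :=
    Finite.of_surjective _ (Quot.mk_surjective (r := rotRel q ℓ))
  have hcard := Nat.card_le_card_of_injective _ hinj
  rw [Nat.card_eq_fintype_card (α := Fin n), Fintype.card_fin] at hcard
  simpa [necklaceCount] using hcard

theorem member (hk : 1 ≤ k) (hℓ : 1 ≤ ℓ) (hdvd : ℓ ∣ k) :
    ∃ c : Fin (necklaceCount q ℓ) → ZMod k → Fin q,
      idValid q k ℓ (necklaceCount q ℓ) c := by
  haveI : NeZero k := ⟨by omega⟩
  haveI : NeZero ℓ := ⟨by omega⟩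
  haveI : Finite (Quot (rotRel q ℓ)) :=
    Finite.of_surjective _ (Quot.mk_surjective (r := rotRel q ℓ))
  let e : Quot (rotRel q ℓ) ≃ Fin (necklaceCount q ℓ) := Finite.equivFinOfCardEq rfl
  refine ⟨fun i j => (e.symm i).out ((j.val : ZMod ℓ)), ?_⟩
  intro i i' hii j j' heq
  apply hii
  apply e.symm.injective
  have hcast : ∀ (x : ZMod k) (s : ℕ), (((x + (s : ZMod k)).val : ℕ) : ZMod ℓ)
      = ((x.val : ℕ) : ZMod ℓ) + (s : ZMod ℓ) := by
    intro x s
    have hmod : ∀ a : ℕ, ((a % k : ℕ) : ZMod ℓ) = (a : ZMod ℓ) := by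
      intro a
      conv_rhs => rw [← Nat.mod_add_div a k]
      push_cast
      have hk0 : ((k : ℕ) : ZMod ℓ) = 0 :=
        (ZMod.natCast_eq_zero_iff k ℓ).mpr hdvd
      rw [hk0, zero_mul, add_zero]
    have h2 : (x + (s : ZMod k)).val = (x.val + s % k) % k := by
      rw [ZMod.val_add, ZMod.val_natCast]
    rw [h2, hmod]
    push_cast
    rw [hmod]
  have hwin : ∀ s : Fin ℓ, (e.symm i).out (((j + ((s:ℕ) : ZMod k)).val : ℕ) : ZMod ℓ)
      = (e.symm i').out (((j' + ((s:ℕ) : ZMod k)).val : ℕ) : ZMod ℓ) :=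
    fun s => congrFun heq s
  have hall : ∀ t : ZMod ℓ,
      (e.symm i).out (((j.val : ℕ) : ZMod ℓ) + t)
      = (e.symm i').out (((j'.val : ℕ) : ZMod ℓ) + t) := by
    intro t
    have hs : ((t.val : ℕ) : ZMod ℓ) = t := ZMod.natCast_rightInverse t
    have h := hwin ⟨t.val, ZMod.val_lt t⟩
    rw [hcast j t.val, hcast j' t.val] at h
    simpa [hs] using h
  set α := ((j.val : ℕ) : ZMod ℓ) with hα
  set β := ((j'.val : ℕ) : ZMod ℓ) with hβ
  have hrel : rotRel q ℓ (e.symm i).out (e.symm i').out := by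
    refine ⟨(α - β).val, ?_⟩
    rw [rot_iter]
    funext x
    have hcv : (((α - β).val : ℕ) : ZMod ℓ) = α - β := ZMod.natCast_rightInverse _
    rw [hcv]
    have h := hall (x - β)
    calc (e.symm i).out (x + (α - β)) = (e.symm i).out (α + (x - β)) := by ring_nf
      _ = (e.symm i').out (β + (x - β)) := h
      _ = (e.symm i').out x := by ring_nf
  have hqq : Quot.mk (rotRel q ℓ) (e.symm i).out = Quot.mk (rotRel q ℓ) (e.symm i').out :=
    Quot.sound hrel
  rwa [Quot.out_eq, Quot.out_eq] at hqq

end assembly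

end Stmt18Aux

/-- **Identification without orientation.** If `ℓ ∣ k`, the greatest `n` admitting an
identification colouring of `n` eBugs with `k` LEDs in `q` colours is the number `Z(q,ℓ)`
of `q`-ary necklaces of length `ℓ`. -/
theorem stmt18 (q k ℓ : ℕ) (hq : 1 ≤ q) (hk : 1 ≤ k) (hℓ : 1 ≤ ℓ) (hdvd : ℓ ∣ k) :
    IsGreatest {n : ℕ | ∃ c : Fin n → ZMod k → Fin q, idValid q k ℓ n c}
      (necklaceCount q ℓ) := by
  constructor
  · exact Stmt18Aux.member q k ℓ hk hℓ hdvd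
  · rintro n ⟨c, hc⟩
    exact Stmt18Aux.upper_bound q k ℓ hk hℓ hdvd n c hc
end
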